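/- arXiv:1705.10502 — 7 statements merged into one kernel-verified Lean document; each statement's English description precedes it below -/
import Mathlib

section
/- Let C(U), C(X), C(Z) be pretriangulated categories related by gluing and equipped with weight structures compatible with the gluing. Then the restriction of j^* induces an equivalence of categories j^* : C(X)_{w=0,i^*w≤−1,i^!w≥1} → C(U)_{w=0,∂w≠0,1}. (Theorem 0B.) -/
set_option linter.unusedVariables false

open CategoryTheory Limits Pretriangulated

universe w₁ w₂ w₃ w₄ v₁ v₂ v₃ v₄ u₁ u₂ u₃ u₄

/-- A weight structure on a pretriangulated category `C`: a pair of classes of objects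
`(C_{w≤0}, C_{w≥0})`, each containing the zero objects and closed under isomorphisms and
retracts (direct summands), such that `C_{w≤0}[-1] ⊆ C_{w≤0}`, `C_{w≥0}[1] ⊆ C_{w≥0}`,
`Hom(A, B[1]) = 0` for `A ∈ C_{w≤0}`, `B ∈ C_{w≥0}`, and every object admits a weight
filtration. -/
structure WeightStructure (C : Type*) [Category C] [HasZeroObject C] [Preadditive C]
    [HasShift C ℤ] [∀ n : ℤ, (shiftFunctor C n).Additive] [Pretriangulated C] where
  le : C → Prop
  ge : C → Prop
  le_zero : ∀ X : C, IsZero X → le X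
  ge_zero : ∀ X : C, IsZero X → ge X
  le_iso : ∀ {X Y : C}, (X ≅ Y) → le X → le Y
  ge_iso : ∀ {X Y : C}, (X ≅ Y) → ge X → ge Y
  le_retract : ∀ {X Y : C} (s : X ⟶ Y) (r : Y ⟶ X), s ≫ r = 𝟙 X → le Y → le X
  ge_retract : ∀ {X Y : C} (s : X ⟶ Y) (r : Y ⟶ X), s ≫ r = 𝟙 X → ge Y → ge X
  le_shift : ∀ X : C, le X → le (X⟦(-1 : ℤ)⟧)
  ge_shift : ∀ X : C, ge X → ge (X⟦(1 : ℤ)⟧)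
  orth : ∀ {A B : C} (f : A ⟶ B⟦(1 : ℤ)⟧), le A → ge B → f = 0
  exists_weight_filtration : ∀ M : C, ∃ (A B : C) (f : A ⟶ M) (g : M ⟶ B)
    (h : B ⟶ A⟦(1 : ℤ)⟧), (Triangle.mk f g h ∈ distTriang C) ∧ le A ∧ ge (B⟦(-1 : ℤ)⟧)

namespace WeightStructure

variable {C : Type*} [Category C] [HasZeroObject C] [Preadditive C]
    [HasShift C ℤ] [∀ n : ℤ, (shiftFunctor C n).Additive] [Pretriangulated C]

/-- `X ∈ C_{w ≤ n}`, i.e. `X[-n] ∈ C_{w ≤ 0}`. -/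
def leW (w : WeightStructure C) (n : ℤ) (X : C) : Prop := w.le (X⟦(-n : ℤ)⟧)

/-- `X ∈ C_{w ≥ n}`, i.e. `X[-n] ∈ C_{w ≥ 0}`. -/
def geW (w : WeightStructure C) (n : ℤ) (X : C) : Prop := w.ge (X⟦(-n : ℤ)⟧)

/-- The heart `C_{w = 0}`. -/
def heart (w : WeightStructure C) (X : C) : Prop := w.le X ∧ w.ge X

/-- `M` is without weights `m, …, n`: there is a distinguished triangle
`M_{≤ m-1} → M → M_{≥ n+1} → M_{≤ m-1}[1]` with `M_{≤ m-1} ∈ C_{w ≤ m-1}` and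
`M_{≥ n+1} ∈ C_{w ≥ n+1}` (a weight filtration avoiding weights `m, …, n`). -/
def WithoutWeights (w : WeightStructure C) (m n : ℤ) (M : C) : Prop :=
  ∃ (A B : C) (f : A ⟶ M) (g : M ⟶ B) (h : B ⟶ A⟦(1 : ℤ)⟧),
    (Triangle.mk f g h ∈ distTriang C) ∧ w.leW (m - 1) A ∧ w.geW (n + 1) B

end WeightStructure

/-- A weight-exact (exact) functor between pretriangulated categories equipped with
weight structures: `F(C_{w≤0}) ⊆ D_{w≤0}` and `F(C_{w≥0}) ⊆ D_{w≥0}`. -/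
def WeightExact {C : Type*} [Category C] [HasZeroObject C] [Preadditive C]
    [HasShift C ℤ] [∀ n : ℤ, (shiftFunctor C n).Additive] [Pretriangulated C]
    {D : Type*} [Category D] [HasZeroObject D] [Preadditive D]
    [HasShift D ℤ] [∀ n : ℤ, (shiftFunctor D n).Additive] [Pretriangulated D]
    (wC : WeightStructure C) (wD : WeightStructure D) (F : C ⥤ D) : Prop :=
  (∀ X : C, wC.le X → wD.le (F.obj X)) ∧ (∀ X : C, wC.ge X → wD.ge (F.obj X))

variable {CU : Type*} [Category CU] [HasZeroObject CU] [Preadditive CU]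
  [HasShift CU ℤ] [∀ n : ℤ, (shiftFunctor CU n).Additive] [Pretriangulated CU]
variable {CX : Type*} [Category CX] [HasZeroObject CX] [Preadditive CX]
  [HasShift CX ℤ] [∀ n : ℤ, (shiftFunctor CX n).Additive] [Pretriangulated CX]
variable {CZ : Type*} [Category CZ] [HasZeroObject CZ] [Preadditive CZ]
  [HasShift CZ ℤ] [∀ n : ℤ, (shiftFunctor CZ n).Additive] [Pretriangulated CZ]

/- The six gluing functors: `jl = j_!`, `js = j^*`, `jr = j_*`,
   `il = i^*`, `im = i_*`, `ir = i^!`; all of them are exact. -/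
variable (jl : CU ⥤ CX) (js : CX ⥤ CU) (jr : CU ⥤ CX)
  (il : CX ⥤ CZ) (im : CZ ⥤ CX) (ir : CX ⥤ CZ)
  [jl.CommShift ℤ] [jl.IsTriangulated] [js.CommShift ℤ] [js.IsTriangulated]
  [jr.CommShift ℤ] [jr.IsTriangulated] [il.CommShift ℤ] [il.IsTriangulated]
  [im.CommShift ℤ] [im.IsTriangulated] [ir.CommShift ℤ] [ir.IsTriangulated]
  [im.Full] [im.Faithful]
variable (adj₁ : jl ⊣ js) (adj₂ : js ⊣ jr) (adj₃ : il ⊣ im) (adj₄ : im ⊣ ir)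

/-- The axioms of a gluing ("recollement") situation relating `C(U)`, `C(X)` and `C(Z)`:
`j^* ∘ i_* = 0`, the unit `id → j^* j_!` and the counit `j^* j_* → id` are isomorphisms,
and the two localization triangles `j_! j^* M → M → i_* i^* M → (j_! j^* M)[1]` and
`i_* i^! M → M → j_* j^* M → (i_* i^! M)[1]` are distinguished.
(Full faithfulness of `i_*` is part of the ambient variable context.) -/
structure IsGluing : Prop where
  js_im_zero : ∀ Z : CZ, IsZero (js.obj (im.obj Z))
  unit_iso : IsIso adj₁.unit
  counit_iso : IsIso adj₂.counit
  tri₁ : ∀ M : CX, ∃ δ : im.obj (il.obj M) ⟶ (jl.obj (js.obj M))⟦(1 : ℤ)⟧,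
    Triangle.mk (adj₁.counit.app M) (adj₃.unit.app M) δ ∈ distTriang CX
  tri₂ : ∀ M : CX, ∃ δ : jr.obj (js.obj M) ⟶ (im.obj (ir.obj M))⟦(1 : ℤ)⟧,
    Triangle.mk (adj₄.counit.app M) (adj₂.unit.app M) δ ∈ distTriang CX

variable (wU : WeightStructure CU) (wX : WeightStructure CX) (wZ : WeightStructure CZ)

/-- Compatibility of the weight structures on `C(U)`, `C(X)`, `C(Z)` with the gluing:
the left adjoints `j_!`, `j^*`, `i^*`, `i_*` respect `(w ≤ 0)`, and the right adjoints
`j^*`, `j_*`, `i_*`, `i^!` respect `(w ≥ 0)`. -/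
structure GluedWeights : Prop where
  jl_le : ∀ X : CU, wU.le X → wX.le (jl.obj X)
  js_le : ∀ X : CX, wX.le X → wU.le (js.obj X)
  js_ge : ∀ X : CX, wX.ge X → wU.ge (js.obj X)
  il_le : ∀ X : CX, wX.le X → wZ.le (il.obj X)
  im_le : ∀ X : CZ, wZ.le X → wX.le (im.obj X)
  im_ge : ∀ X : CZ, wZ.ge X → wX.ge (im.obj X)
  jr_ge : ∀ X : CU, wU.ge X → wX.ge (jr.obj X)
  ir_ge : ∀ X : CX, wX.ge X → wZ.ge (ir.obj X)

/-! ### Auxiliary lemmas about weight structures -/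

namespace WeightStructure

section AuxWS

variable {C : Type*} [Category C] [HasZeroObject C] [Preadditive C]
    [HasShift C ℤ] [∀ n : ℤ, (shiftFunctor C n).Additive] [Pretriangulated C]
    (w : WeightStructure C)

lemma leW_iff (n m : ℤ) (h : -n = m) (X : C) : w.leW n X ↔ w.le (X⟦m⟧) := by
  unfold WeightStructure.leW; rw [h]

lemma geW_iff (n m : ℤ) (h : -n = m) (X : C) : w.geW n X ↔ w.ge (X⟦m⟧) := by
  unfold WeightStructure.geW; rw [h]

lemma le_unshift {X : C} (h : w.le (X⟦(1 : ℤ)⟧)) : w.le X :=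
  w.le_iso ((shiftFunctorCompIsoId C (1 : ℤ) (-1 : ℤ) (by ring)).app X) (w.le_shift _ h)

lemma hom_zero₁ {A B : C} (f : A ⟶ B) (hA : w.le A) (hB : w.ge (B⟦(-1 : ℤ)⟧)) : f = 0 := by
  have e : ((B⟦(-1 : ℤ)⟧)⟦(1 : ℤ)⟧) ≅ B :=
    (shiftFunctorCompIsoId C (-1 : ℤ) (1 : ℤ) (by ring)).app B
  have h := w.orth (f ≫ e.inv) hA hB
  calc f = (f ≫ e.inv) ≫ e.hom := by simp
  _ = 0 := by rw [h, zero_comp]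

lemma hom_zero₂ {A B : C} (f : A ⟶ B) (hA : w.le (A⟦(1 : ℤ)⟧)) (hB : w.ge B) : f = 0 := by
  apply (shiftFunctor C (1 : ℤ)).map_injective
  rw [Functor.map_zero]
  exact w.hom_zero₁ _ hA
    (w.ge_iso ((shiftFunctorCompIsoId C (1 : ℤ) (-1 : ℤ) (by ring)).app B).symm hB)

/-- The class `(w ≤ 0)` is closed under extensions. -/
lemma le_ext {T : Triangle C} (hT : T ∈ distTriang C)
    (h₁ : w.le T.obj₁) (h₃ : w.le T.obj₃) : w.le T.obj₂ := by
  obtain ⟨A, B, a, g, hh, hD, hA, hB⟩ := w.exists_weight_filtration T.obj₂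
  have hg : g = 0 := by
    obtain ⟨ψ, hψ⟩ := Triangle.yoneda_exact₂ T hT g (w.hom_zero₁ _ h₁ hB)
    rw [hψ, w.hom_zero₁ ψ h₃ hB, comp_zero]
  obtain ⟨s, hs⟩ := Triangle.coyoneda_exact₂ _ hD (𝟙 T.obj₂)
    (by rw [show (Triangle.mk a g hh).mor₂ = g from rfl, hg]; exact comp_zero)
  exact w.le_retract s a hs.symm hA

/-- A weight decomposition of `Y` with pieces in `(w ≤ -1)` and `(w ≥ 0)`. -/
lemma exists_wf_neg (Y : C) :
    ∃ (A B : C) (f : A ⟶ Y) (g : Y ⟶ B) (h : B ⟶ A⟦(1 : ℤ)⟧),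
      (Triangle.mk f g h ∈ distTriang C) ∧ w.le (A⟦(1 : ℤ)⟧) ∧ w.ge B := by
  obtain ⟨A', B', f', g', h', hD, hA', hB'⟩ := w.exists_weight_filtration (Y⟦(1 : ℤ)⟧)
  have hD' := Triangle.shift_distinguished _ hD (-1 : ℤ)
  set T' := (CategoryTheory.shiftFunctor (Triangle C) (-1 : ℤ)).obj (Triangle.mk f' g' h')
    with hT'def
  have e : ((Y⟦(1 : ℤ)⟧)⟦(-1 : ℤ)⟧) ≅ Y :=
    (shiftFunctorCompIsoId C (1 : ℤ) (-1 : ℤ) (by ring)).app Y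
  refine ⟨T'.obj₁, T'.obj₃, T'.mor₁ ≫ e.hom, e.inv ≫ T'.mor₂, T'.mor₃, ?_, ?_, ?_⟩
  · refine isomorphic_distinguished _ hD' _ ?_
    refine Triangle.isoMk _ _ (Iso.refl _) e.symm (Iso.refl _) ?_ ?_ ?_
    · exact ((Category.assoc _ _ _).trans ((congrArg (fun k => T'.mor₁ ≫ k) e.hom_inv_id).trans
        (Category.comp_id _))).trans (Category.id_comp _).symm
    · exact Category.comp_id _
    · exact (by simp : T'.mor₃ ≫ (shiftFunctor C 1).map (𝟙 T'.obj₁) = T'.mor₃).trans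
        (Category.id_comp _).symm
  · exact w.le_iso ((shiftFunctorCompIsoId C (-1 : ℤ) (1 : ℤ) (by ring)).app A').symm hA'
  · exact hB'

/-- The class `(w ≥ 0)` is closed under extensions. -/
lemma ge_ext {T : Triangle C} (hT : T ∈ distTriang C)
    (h₁ : w.ge T.obj₁) (h₃ : w.ge T.obj₃) : w.ge T.obj₂ := by
  obtain ⟨A, B, a, g, hh, hD, hA, hB⟩ := w.exists_wf_neg T.obj₂
  have ha : a = 0 := by
    obtain ⟨φ, hφ⟩ := Triangle.coyoneda_exact₂ T hT a (w.hom_zero₂ _ hA h₃)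
    rw [hφ, w.hom_zero₂ φ hA h₁, zero_comp]
  obtain ⟨r, hr⟩ := Triangle.yoneda_exact₂ _ hD (𝟙 T.obj₂)
    (by rw [show (Triangle.mk a g hh).mor₁ = a from rfl, ha]; exact zero_comp)
  exact w.ge_retract g r hr.symm hB

end AuxWS

end WeightStructure

/-! ### Auxiliary lemmas about the gluing situation -/

section AuxGluing


include adj₄ in
/-- There is no nonzero morphism `i_* Z ⟶ N` when `Z ∈ C(Z)_{w ≤ 0}` and
`i^! N ∈ C(Z)_{w ≥ 1}`. -/
lemma hom_im_zero {Z : CZ} {N : CX} (α : im.obj Z ⟶ N)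
    (hZ : wZ.le Z) (hN : wZ.ge ((ir.obj N)⟦(-1 : ℤ)⟧)) : α = 0 := by
  have h0 : (adj₄.homEquiv Z N) α = 0 := wZ.hom_zero₁ _ hZ hN
  rw [← (adj₄.homEquiv Z N).symm_apply_apply α, h0, Adjunction.homEquiv_counit,
    Functor.map_zero, zero_comp]

include adj₄ in
/-- Shifted version of `hom_im_zero`. -/
lemma hom_im_shift_zero {Z : CZ} {N : CX} (α : (im.obj Z)⟦(-1 : ℤ)⟧ ⟶ N)
    (hZ : wZ.le (Z⟦(-1 : ℤ)⟧)) (hN : wZ.ge ((ir.obj N)⟦(-1 : ℤ)⟧)) : α = 0 := by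
  have e : im.obj (Z⟦(-1 : ℤ)⟧) ≅ (im.obj Z)⟦(-1 : ℤ)⟧ := (im.commShiftIso (-1 : ℤ)).app Z
  have h := hom_im_zero im ir adj₄ wZ (e.hom ≫ α) hZ hN
  calc α = e.inv ≫ (e.hom ≫ α) := by simp
  _ = 0 := by rw [h, comp_zero]

/-- Injectivity of `js.map` on the relevant subcategory. -/
lemma js_map_injective (hglue : IsGluing jl js jr il im ir adj₁ adj₂ adj₃ adj₄)
    {M N : CX} (hM : wZ.le ((il.obj M)⟦(1 : ℤ)⟧)) (hN : wZ.ge ((ir.obj N)⟦(-1 : ℤ)⟧))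
    (φ : M ⟶ N) (hφ : js.map φ = 0) : φ = 0 := by
  obtain ⟨δ, hδ⟩ := hglue.tri₁ M
  have h1 : adj₁.counit.app M ≫ φ = 0 := by
    rw [← Functor.id_map φ, ← adj₁.counit.naturality φ]
    dsimp
    rw [hφ, Functor.map_zero, zero_comp]
  obtain ⟨ψ, hψ⟩ := Triangle.yoneda_exact₂ _ hδ φ h1
  rw [hψ, hom_im_zero im ir adj₄ wZ ψ (wZ.le_unshift hM) hN]; exact comp_zero

/-- Surjectivity of `js.map` on the relevant subcategory. -/
lemma js_map_surjective (hglue : IsGluing jl js jr il im ir adj₁ adj₂ adj₃ adj₄)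
    {M N : CX} (hM : wZ.le ((il.obj M)⟦(1 : ℤ)⟧)) (hN : wZ.ge ((ir.obj N)⟦(-1 : ℤ)⟧))
    (ψ : js.obj M ⟶ js.obj N) : ∃ φ : M ⟶ N, js.map φ = ψ := by
  obtain ⟨δ, hδ⟩ := hglue.tri₁ M
  set T := Triangle.mk (adj₁.counit.app M) (adj₃.unit.app M) δ with hTdef
  have hT' := inv_rot_of_distTriang _ hδ
  have hz : T.invRotate.mor₁ ≫ (jl.map ψ ≫ adj₁.counit.app N) = 0 :=
    hom_im_shift_zero im ir adj₄ wZ _ (wZ.le_shift _ (wZ.le_unshift hM)) hN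
  obtain ⟨φ₁, hφ⟩ := Triangle.yoneda_exact₂ _ hT' (jl.map ψ ≫ adj₁.counit.app N) hz
  let φ : M ⟶ N := φ₁
  refine ⟨φ, ?_⟩
  have h2' : adj₁.counit.app M ≫ φ = jl.map ψ ≫ adj₁.counit.app N := hφ.symm
  have h2 : js.map (adj₁.counit.app M) ≫ js.map φ
      = js.map (jl.map ψ) ≫ js.map (adj₁.counit.app N) := by
    rw [← js.map_comp, ← js.map_comp, h2']
  have h3 : adj₁.unit.app (js.obj M) ≫ js.map (jl.map ψ) = ψ ≫ adj₁.unit.app (js.obj N) := by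
    simpa using (adj₁.unit.naturality ψ).symm
  calc js.map φ
      = (adj₁.unit.app (js.obj M) ≫ js.map (adj₁.counit.app M)) ≫ js.map φ := by
        rw [adj₁.right_triangle_components]
        exact (Category.id_comp _).symm
    _ = adj₁.unit.app (js.obj M) ≫ (js.map (jl.map ψ) ≫ js.map (adj₁.counit.app N)) := by
        rw [Category.assoc, h2]
    _ = (adj₁.unit.app (js.obj M) ≫ js.map (jl.map ψ)) ≫ js.map (adj₁.counit.app N) := by
        rw [Category.assoc]
    _ = ψ ≫ (adj₁.unit.app (js.obj N) ≫ js.map (adj₁.counit.app N)) := by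
        rw [h3, Category.assoc]
    _ = ψ := by
        rw [adj₁.right_triangle_components]
        exact Category.comp_id ψ

/-- The functor `js` sends the subcategory `C(X)_{w=0, i^*w ≤ -1, i^!w ≥ 1}` into
`C(U)_{w=0, ∂w ≠ 0,1}`. -/
lemma key_h (hglue : IsGluing jl js jr il im ir adj₁ adj₂ adj₃ adj₄)
    (hw : GluedWeights jl js jr il im ir wU wX wZ) (M : CX)
    (hM : wX.heart M ∧ wZ.leW (-1) (il.obj M) ∧ wZ.geW 1 (ir.obj M)) :
    wU.heart (js.obj M) ∧ wZ.WithoutWeights 0 1 (il.obj (jr.obj (js.obj M))) := by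
  obtain ⟨⟨hle, hge⟩, hil, hir⟩ := hM
  refine ⟨⟨hw.js_le M hle, hw.js_ge M hge⟩, ?_⟩
  obtain ⟨δ, hδ⟩ := hglue.tri₂ M
  have hD := rot_of_distTriang _ (il.map_distinguished _ hδ)
  refine ⟨_, _, _, _, _, hD, ?_, ?_⟩
  · rw [wZ.leW_iff (0 - 1) 1 (by norm_num)]
    show wZ.le ((il.obj M)⟦(1 : ℤ)⟧)
    exact (wZ.leW_iff (-1) 1 (by norm_num) _).mp hil
  · rw [wZ.geW_iff (1 + 1) (-2) (by norm_num)]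
    show wZ.ge (((il.obj (im.obj (ir.obj M)))⟦(1 : ℤ)⟧)⟦(-2 : ℤ)⟧)
    have hir' : wZ.ge ((ir.obj M)⟦(-1 : ℤ)⟧) := (wZ.geW_iff 1 (-1) (by norm_num) _).mp hir
    have e₁ : il.obj (im.obj (ir.obj M)) ≅ ir.obj M := asIso (adj₃.counit.app (ir.obj M))
    have i₁ : ((ir.obj M)⟦(-1 : ℤ)⟧) ≅ ((il.obj (im.obj (ir.obj M)))⟦(-1 : ℤ)⟧) :=
      (shiftFunctor CZ (-1 : ℤ)).mapIso e₁.symm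
    have i₂ : ((il.obj (im.obj (ir.obj M)))⟦(-1 : ℤ)⟧)
        ≅ (((il.obj (im.obj (ir.obj M)))⟦(1 : ℤ)⟧)⟦(-2 : ℤ)⟧) :=
      (shiftFunctorAdd' CZ (1 : ℤ) (-2 : ℤ) (-1 : ℤ) (by norm_num)).app _
    exact wZ.ge_iso (i₁ ≪≫ i₂) hir'

/-- Essential surjectivity: construction of the intermediate extension. -/
lemma ess_surj_aux (hglue : IsGluing jl js jr il im ir adj₁ adj₂ adj₃ adj₄)
    (hw : GluedWeights jl js jr il im ir wU wX wZ)
    (MU : CU) (hU : wU.heart MU) (hWW : wZ.WithoutWeights 0 1 (il.obj (jr.obj MU))) :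
    ∃ (M : CX) (_ : wX.heart M ∧ wZ.leW (-1) (il.obj M) ∧ wZ.geW 1 (ir.obj M)),
      Nonempty (js.obj M ≅ MU) := by
  haveI := hglue.counit_iso
  obtain ⟨A, B, f, g, h0, hD, hA0, hB0⟩ := hWW
  have hA : wZ.le (A⟦(1 : ℤ)⟧) := (wZ.leW_iff (0 - 1) 1 (by norm_num) _).mp hA0
  have hB : wZ.ge (B⟦(-2 : ℤ)⟧) := (wZ.geW_iff (1 + 1) (-2) (by norm_num) _).mp hB0
  haveI hcB : IsIso (adj₃.counit.app B) := inferInstance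
  obtain ⟨M, m₁, m₃, hTM⟩ := distinguished_cocone_triangle₁ (adj₃.unit.app (jr.obj MU) ≫ im.map g)
  -- (1) `js.obj M ≅ MU`
  have hjs := js.map_distinguished _ hTM
  haveI hiso1 : IsIso (js.map m₁) :=
    (Triangle.isZero₃_iff_isIso₁ _ hjs).mp (hglue.js_im_zero B)
  have eU : js.obj M ≅ MU := asIso (js.map m₁) ≪≫ asIso (adj₂.counit.app MU)
  -- (2) `i^! j_* = 0`
  have hzY : IsZero (ir.obj (jr.obj MU)) := by
    obtain ⟨δ₂, hδ₂⟩ := hglue.tri₂ (jr.obj MU)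
    haveI : IsIso (𝟙 (jr.obj MU)) := inferInstance
    haveI : IsIso (adj₂.unit.app (jr.obj MU)) :=
      IsIso.of_isIso_fac_right (adj₂.right_triangle_components MU)
    have h1 : IsZero (im.obj (ir.obj (jr.obj MU))) :=
      (Triangle.isZero₁_iff_isIso₂ _ hδ₂).mpr (by show IsIso (adj₂.unit.app (jr.obj MU)); infer_instance)
    rw [IsZero.iff_id_eq_zero]
    apply im.map_injective
    rw [im.map_id, im.map_zero]
    exact h1.eq_of_src _ _
  -- (3) `i^! M ≅ B⟦-1⟧`, so `i^! M ∈ C(Z)_{w ≥ 1}`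
  have hirD := ir.map_distinguished _ hTM
  haveI hiso3 : IsIso ((ir.mapTriangle.obj
      (Triangle.mk m₁ (adj₃.unit.app (jr.obj MU) ≫ im.map g) m₃)).mor₃) :=
    (Triangle.isZero₂_iff_isIso₃ _ hirD).mp hzY
  have eB : B ≅ ((ir.obj M)⟦(1 : ℤ)⟧) :=
    asIso (adj₄.unit.app B) ≪≫
      @asIso _ _ _ _ ((ir.mapTriangle.obj (Triangle.mk m₁ (adj₃.unit.app (jr.obj MU) ≫ im.map g) m₃)).mor₃) hiso3
  have hgeW : wZ.geW 1 (ir.obj M) := by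
    rw [wZ.geW_iff 1 (-1) (by norm_num)]
    have i₂ : ((ir.obj M)⟦(-1 : ℤ)⟧) ≅ (((ir.obj M)⟦(1 : ℤ)⟧)⟦(-2 : ℤ)⟧) :=
      (shiftFunctorAdd' CZ (1 : ℤ) (-2 : ℤ) (-1 : ℤ) (by norm_num)).app (ir.obj M)
    exact wZ.ge_iso ((shiftFunctor CZ (-2 : ℤ)).mapIso eB ≪≫ i₂.symm) hB
  -- (4) `i^* M ≅ A`, so `i^* M ∈ C(Z)_{w ≤ -1}`
  have hilD := il.map_distinguished _ hTM
  have hT₃rot := rot_of_distTriang _ hilD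
  have hTDrot := rot_of_distTriang _ hD
  have key : il.map (adj₃.unit.app (jr.obj MU) ≫ im.map g) ≫ adj₃.counit.app B = g := by
    rw [il.map_comp, Category.assoc]
    rw [show il.map (im.map g) ≫ adj₃.counit.app B = adj₃.counit.app (il.obj (jr.obj MU)) ≫ g by
      simpa using adj₃.counit.naturality g]
    rw [← Category.assoc]; erw [adj₃.left_triangle_components]
    exact Category.id_comp g
  have comm : (Triangle.mk f g h0).rotate.mor₁ ≫ @inv _ _ _ _ (adj₃.counit.app B) hcB
      = 𝟙 (il.obj (jr.obj MU)) ≫ (il.mapTriangle.obj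
        (Triangle.mk m₁ (adj₃.unit.app (jr.obj MU) ≫ im.map g) m₃)).rotate.mor₁ := by
    show g ≫ @inv _ _ _ _ (adj₃.counit.app B) hcB
      = 𝟙 (il.obj (jr.obj MU)) ≫ il.map (adj₃.unit.app (jr.obj MU) ≫ im.map g)
    rw [Category.id_comp, IsIso.comp_inv_eq]
    exact key.symm
  obtain ⟨c, hc₁, hc₂⟩ := Pretriangulated.complete_distinguished_triangle_morphism
    (Triangle.mk f g h0).rotate (il.mapTriangle.obj
      (Triangle.mk m₁ (adj₃.unit.app (jr.obj MU) ≫ im.map g) m₃)).rotate hTDrot hT₃rot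
    (𝟙 (il.obj (jr.obj MU))) (@inv _ _ _ _ (adj₃.counit.app B) hcB) comm
  haveI hcIso : IsIso c := by
    refine isIso₃_of_isIso₁₂
      (Triangle.homMk _ _ (𝟙 (il.obj (jr.obj MU))) (@inv _ _ _ _ (adj₃.counit.app B) hcB) c comm hc₁ hc₂)
      hTDrot hT₃rot ?_ ?_
    · exact (inferInstance : IsIso (𝟙 (il.obj (jr.obj MU))))
    · exact @IsIso.inv_isIso _ _ _ _ _ hcB
  have hleW : wZ.leW (-1) (il.obj M) := by
    rw [wZ.leW_iff (-1) 1 (by norm_num)]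
    exact wZ.le_iso (@asIso _ _ _ _ c hcIso) hA
  -- (5) `M` lies in the heart
  have hgeM : wX.ge M := by
    have hinv := inv_rot_of_distTriang _ hTM
    refine wX.ge_ext hinv ?_ ?_
    · show wX.ge ((im.obj B)⟦(-1 : ℤ)⟧)
      have h1 : wZ.ge (B⟦(-1 : ℤ)⟧) :=
        wZ.ge_iso (((shiftFunctorAdd' CZ (-2 : ℤ) (1 : ℤ) (-1 : ℤ) (by norm_num)).app B).symm)
          (wZ.ge_shift _ hB)
      exact wX.ge_iso ((im.commShiftIso (-1 : ℤ)).app B) (hw.im_ge _ h1)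
    · show wX.ge (jr.obj MU)
      exact hw.jr_ge _ hU.2
  have hleM : wX.le M := by
    obtain ⟨δ₁, hδ₁⟩ := hglue.tri₁ M
    refine wX.le_ext hδ₁ ?_ ?_
    · show wX.le (jl.obj (js.obj M))
      exact hw.jl_le _ (wU.le_iso eU.symm hU.1)
    · show wX.le (im.obj (il.obj M))
      exact hw.im_le _ (wZ.le_unshift ((wZ.leW_iff (-1) 1 (by norm_num) _).mp hleW))
  exact ⟨M, ⟨⟨hleM, hgeM⟩, hleW, hgeW⟩, ⟨eU⟩⟩

end AuxGluing

/-- **Theorem 0B.** In a gluing situation with compatible weight structures, the restriction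
of `j^*` induces an equivalence of categories
`C(X)_{w=0, i^*w ≤ -1, i^!w ≥ 1} ≃ C(U)_{w=0, ∂w ≠ 0,1}`. -/
theorem restriction_of_js_is_equivalence
    (hglue : IsGluing jl js jr il im ir adj₁ adj₂ adj₃ adj₄)
    (hw : GluedWeights jl js jr il im ir wU wX wZ) :
    ∃ h : ∀ M : ObjectProperty.FullSubcategory
        (fun M : CX => wX.heart M ∧ wZ.leW (-1) (il.obj M) ∧ wZ.geW 1 (ir.obj M)),
      wU.heart (js.obj M.obj) ∧ wZ.WithoutWeights 0 1 (il.obj (jr.obj (js.obj M.obj))),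
      (ObjectProperty.lift
        (fun MU : CU => wU.heart MU ∧ wZ.WithoutWeights 0 1 (il.obj (jr.obj MU)))
        (ObjectProperty.ι
          (fun M : CX => wX.heart M ∧ wZ.leW (-1) (il.obj M) ∧ wZ.geW 1 (ir.obj M)) ⋙ js)
        h).IsEquivalence := by
  refine ⟨fun M => key_h jl js jr il im ir adj₁ adj₂ adj₃ adj₄ wU wX wZ hglue hw M.obj M.property, ?_⟩
  refine { faithful := ⟨?_⟩, full := ⟨?_⟩, essSurj := ⟨?_⟩ }
  · -- faithfulness
    intro X Y φ₁ φ₂ hfg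
    have hM : wZ.le ((il.obj X.obj)⟦(1 : ℤ)⟧) :=
      (wZ.leW_iff (-1) 1 (by norm_num) _).mp X.property.2.1
    have hN : wZ.ge ((ir.obj Y.obj)⟦(-1 : ℤ)⟧) :=
      (wZ.geW_iff 1 (-1) (by norm_num) _).mp Y.property.2.2
    have hfg' : js.map φ₁.hom = js.map φ₂.hom := congrArg (fun f => f.hom) hfg
    have h1 : js.map (φ₁.hom - φ₂.hom) = 0 := by
      rw [Functor.map_sub, sub_eq_zero]
      exact hfg'
    have h2 : φ₁.hom - φ₂.hom = 0 :=
      js_map_injective jl js jr il im ir adj₁ adj₂ adj₃ adj₄ wZ hglue hM hN _ h1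
    exact InducedCategory.hom_ext (sub_eq_zero.mp h2)
  · -- fullness
    intro X Y ψ
    have hM : wZ.le ((il.obj X.obj)⟦(1 : ℤ)⟧) :=
      (wZ.leW_iff (-1) 1 (by norm_num) _).mp X.property.2.1
    have hN : wZ.ge ((ir.obj Y.obj)⟦(-1 : ℤ)⟧) :=
      (wZ.geW_iff 1 (-1) (by norm_num) _).mp Y.property.2.2
    obtain ⟨φ, hφ⟩ := js_map_surjective jl js jr il im ir adj₁ adj₂ adj₃ adj₄ wZ hglue hM hN
      ψ.hom
    exact ⟨ObjectProperty.homMk φ, InducedCategory.hom_ext hφ⟩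
  · -- essential surjectivity
    intro YU
    obtain ⟨M, hM, ⟨e⟩⟩ := ess_surj_aux jl js jr il im ir adj₁ adj₂ adj₃ adj₄ wU wX wZ hglue hw
      YU.obj YU.property.1 YU.property.2
    exact ⟨⟨M, hM⟩, ⟨ObjectProperty.isoMk _ e⟩⟩
end

section
/- Let C(U), C(X), C(Z) be pretriangulated categories related by gluing and equipped with weight structures compatible with the gluing. Let M and M' be objects of C(X)_{w=0,i^*w≤−1,i^!w≥1}, and let f : M → M' be a morphism with j^* f = 0. Then f = 0; in other words, the restriction of j^* to C(X)_{w=0,i^*w≤−1,i^!w≥1} is faithful. (Faithfulness step in the proof of Theorem 0B.) -/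
set_option linter.unusedVariables false

open CategoryTheory Limits Pretriangulated

universe w₁ w₂ w₃ w₄ v₁ v₂ v₃ v₄ u₁ u₂ u₃ u₄

variable {CU : Type*} [Category CU] [HasZeroObject CU] [Preadditive CU]
  [HasShift CU ℤ] [∀ n : ℤ, (shiftFunctor CU n).Additive] [Pretriangulated CU]
variable {CX : Type*} [Category CX] [HasZeroObject CX] [Preadditive CX]
  [HasShift CX ℤ] [∀ n : ℤ, (shiftFunctor CX n).Additive] [Pretriangulated CX]
variable {CZ : Type*} [Category CZ] [HasZeroObject CZ] [Preadditive CZ]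
  [HasShift CZ ℤ] [∀ n : ℤ, (shiftFunctor CZ n).Additive] [Pretriangulated CZ]

/- The six gluing functors: `jl = j_!`, `js = j^*`, `jr = j_*`,
   `il = i^*`, `im = i_*`, `ir = i^!`; all of them are exact. -/
variable (jl : CU ⥤ CX) (js : CX ⥤ CU) (jr : CU ⥤ CX)
  (il : CX ⥤ CZ) (im : CZ ⥤ CX) (ir : CX ⥤ CZ)
  [jl.CommShift ℤ] [jl.IsTriangulated] [js.CommShift ℤ] [js.IsTriangulated]
  [jr.CommShift ℤ] [jr.IsTriangulated] [il.CommShift ℤ] [il.IsTriangulated]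
  [im.CommShift ℤ] [im.IsTriangulated] [ir.CommShift ℤ] [ir.IsTriangulated]
  [im.Full] [im.Faithful]
variable (adj₁ : jl ⊣ js) (adj₂ : js ⊣ jr) (adj₃ : il ⊣ im) (adj₄ : im ⊣ ir)

variable (wU : WeightStructure CU) (wX : WeightStructure CX) (wZ : WeightStructure CZ)

/-- **Faithfulness step in the proof of Theorem 0B.** If `M, M'` belong to
`C(X)_{w=0, i^*w ≤ -1, i^!w ≥ 1}` and `f : M ⟶ M'` satisfies `j^* f = 0`, then `f = 0`. -/
theorem restriction_of_js_is_faithful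
    (hglue : IsGluing jl js jr il im ir adj₁ adj₂ adj₃ adj₄)
    (hw : GluedWeights jl js jr il im ir wU wX wZ)
    (M M' : CX)
    (hM : wX.heart M ∧ wZ.leW (-1) (il.obj M) ∧ wZ.geW 1 (ir.obj M))
    (hM' : wX.heart M' ∧ wZ.leW (-1) (il.obj M') ∧ wZ.geW 1 (ir.obj M'))
    (f : M ⟶ M') (hf : js.map f = 0) : f = 0 := by
  obtain ⟨δ, hT⟩ := hglue.tri₂ M'
  -- f ≫ unit = 0 since js.map f = 0
  have h2 : f ≫ (Triangle.mk (adj₄.counit.app M') (adj₂.unit.app M') δ).mor₂ = 0 := by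
    show f ≫ adj₂.unit.app M' = 0
    rw [← adj₂.unit_naturality f, hf, Functor.map_zero, comp_zero]
  obtain ⟨g, hg⟩ := Triangle.coyoneda_exact₂ _ hT f h2
  set N := im.obj (ir.obj M') with hN
  -- N⟦-1⟧ ∈ wX.ge
  have hge : wX.ge (N⟦(-1 : ℤ)⟧) := by
    have := hw.im_ge _ hM'.2.2
    exact wX.ge_iso ((im.commShiftIso (-1 : ℤ)).app (ir.obj M')) this
  have hle : wX.le M := hM.1.1
  have e := shiftFunctorCompIsoId CX (-1 : ℤ) (1 : ℤ) (by omega)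
  have hg0 : g ≫ e.inv.app N = 0 := wX.orth (g ≫ e.inv.app N) hle hge
  have : g = 0 := by
    have := hg0 =≫ e.hom.app N
    exact (cancel_mono (e.inv.app N)).1 (hg0.trans zero_comp.symm)
  rw [hg, this, zero_comp]
  rfl
end

section
/- Let C(U), C(X), C(Z) be pretriangulated categories related by gluing and equipped with weight structures compatible with the gluing. For every object M of C(X)_{w=0,i^*w≤−1,i^!w≥1}, the unit and counit maps yield a distinguished triangle i^* M → i^* j_* j^* M → (i^! M)[1] → (i^* M)[1]; since i^* M ∈ C(Z)_{w≤−1} and (i^! M)[1] ∈ C(Z)_{w≥2}, this is a weight filtration of i^* j_* j^* M avoiding weights 0 and 1. In particular, j^* maps C(X)_{w=0,i^*w≤−1,i^!w≥1} into C(U)_{w=0,∂w≠0,1}. (Essential-image step in the proof of Theorem 0B.) -/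
set_option linter.unusedVariables false

open CategoryTheory Limits Pretriangulated

universe w₁ w₂ w₃ w₄ v₁ v₂ v₃ v₄ u₁ u₂ u₃ u₄

variable {CU : Type*} [Category CU] [HasZeroObject CU] [Preadditive CU]
  [HasShift CU ℤ] [∀ n : ℤ, (shiftFunctor CU n).Additive] [Pretriangulated CU]
variable {CX : Type*} [Category CX] [HasZeroObject CX] [Preadditive CX]
  [HasShift CX ℤ] [∀ n : ℤ, (shiftFunctor CX n).Additive] [Pretriangulated CX]
variable {CZ : Type*} [Category CZ] [HasZeroObject CZ] [Preadditive CZ]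
  [HasShift CZ ℤ] [∀ n : ℤ, (shiftFunctor CZ n).Additive] [Pretriangulated CZ]

/- The six gluing functors: `jl = j_!`, `js = j^*`, `jr = j_*`,
   `il = i^*`, `im = i_*`, `ir = i^!`; all of them are exact. -/
variable (jl : CU ⥤ CX) (js : CX ⥤ CU) (jr : CU ⥤ CX)
  (il : CX ⥤ CZ) (im : CZ ⥤ CX) (ir : CX ⥤ CZ)
  [jl.CommShift ℤ] [jl.IsTriangulated] [js.CommShift ℤ] [js.IsTriangulated]
  [jr.CommShift ℤ] [jr.IsTriangulated] [il.CommShift ℤ] [il.IsTriangulated]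
  [im.CommShift ℤ] [im.IsTriangulated] [ir.CommShift ℤ] [ir.IsTriangulated]
  [im.Full] [im.Faithful]
variable (adj₁ : jl ⊣ js) (adj₂ : js ⊣ jr) (adj₃ : il ⊣ im) (adj₄ : im ⊣ ir)

variable (wU : WeightStructure CU) (wX : WeightStructure CX) (wZ : WeightStructure CZ)

/-- **Essential-image step in the proof of Theorem 0B.** For every
`M ∈ C(X)_{w=0, i^*w ≤ -1, i^!w ≥ 1}`, the unit and counit maps yield a distinguished
triangle `i^* M → i^* j_* j^* M → (i^! M)[1] → (i^* M)[1]`; one has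
`i^* M ∈ C(Z)_{w ≤ -1}` and `(i^! M)[1] ∈ C(Z)_{w ≥ 2}`, so this is a weight filtration
of `i^* j_* j^* M` avoiding weights `0` and `1`. In particular `j^* M` belongs to
`C(U)_{w=0, ∂w ≠ 0,1}`. -/
theorem js_maps_into_boundary_avoiding
    (hglue : IsGluing jl js jr il im ir adj₁ adj₂ adj₃ adj₄)
    (hw : GluedWeights jl js jr il im ir wU wX wZ)
    (M : CX)
    (hM : wX.heart M ∧ wZ.leW (-1) (il.obj M) ∧ wZ.geW 1 (ir.obj M)) :
    (∃ (g : il.obj (jr.obj (js.obj M)) ⟶ (ir.obj M)⟦(1 : ℤ)⟧)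
        (h : (ir.obj M)⟦(1 : ℤ)⟧ ⟶ (il.obj M)⟦(1 : ℤ)⟧),
      Triangle.mk (il.map (adj₂.unit.app M)) g h ∈ distTriang CZ) ∧
    wZ.leW (-1) (il.obj M) ∧ wZ.geW 2 ((ir.obj M)⟦(1 : ℤ)⟧) ∧
    wZ.WithoutWeights 0 1 (il.obj (jr.obj (js.obj M))) ∧
    wU.heart (js.obj M) := by
  obtain ⟨⟨hMle, hMge⟩, hle, hge⟩ := hM
  obtain ⟨δ, hT⟩ := hglue.tri₂ M
  have hT2 := il.map_distinguished _ hT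
  have hT3 := rot_of_distTriang _ hT2
  set rot := (il.mapTriangle.obj (Triangle.mk (adj₄.counit.app M) (adj₂.unit.app M) δ)).rotate
    with hrot
  have : IsIso adj₃.counit := adj₃.counit_isIso_of_R_fully_faithful
  let e : il.obj (im.obj (ir.obj M)) ≅ ir.obj M := asIso (adj₃.counit.app (ir.obj M))
  let e1 : (il.obj (im.obj (ir.obj M)))⟦(1:ℤ)⟧ ≅ (ir.obj M)⟦(1:ℤ)⟧ :=
    (shiftFunctor CZ (1:ℤ)).mapIso e
  have key : Triangle.mk (il.map (adj₂.unit.app M)) (rot.mor₂ ≫ e1.hom)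
      (e1.inv ≫ rot.mor₃) ∈ distTriang CZ := by
    refine isomorphic_distinguished _ hT3 _ ?_
    refine Triangle.isoMk _ _ (Iso.refl _) (Iso.refl _) e1.symm ?_ ?_ ?_
    · exact (Category.comp_id _).trans (Category.id_comp _).symm
    · exact (Category.assoc _ _ _).trans ((congrArg (fun f => _ ≫ f) e1.hom_inv_id).trans
        ((Category.comp_id _).trans (Category.id_comp _).symm))
    · exact (congrArg (fun f => _ ≫ f) ((shiftFunctor CZ (1:ℤ)).map_id _)).trans (Category.comp_id _)
  have hge2 : wZ.geW 2 ((ir.obj M)⟦(1 : ℤ)⟧) := by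
    have e2 := (shiftFunctorAdd' CZ (1:ℤ) (-2) (-1) (by ring)).app (ir.obj M)
    exact wZ.ge_iso e2 hge
  refine ⟨⟨_, _, key⟩, hle, hge2, ?_, hw.js_le M hMle, hw.js_ge M hMge⟩
  refine ⟨il.obj M, (ir.obj M)⟦(1:ℤ)⟧, _, _, _, key, ?_, ?_⟩
  · have : (0:ℤ) - 1 = -1 := by norm_num
    rw [this]; exact hle
  · have : (1:ℤ) + 1 = 2 := by norm_num
    rw [this]; exact hge2
end

section
/- Let C(U), C(X), C(Z) be pretriangulated categories related by gluing and equipped with weight structures compatible with the gluing, and let D_U, D_X, D_Z be contravariant exact auto-equivalences compatible with the gluing and with the weight structures. Then D_U maps C(U)_{w=0,∂w≠0,1} into itself, D_X maps C(X)_{w=0,i^*w≤−1,i^!w≥1} into itself, and, denoting by j_{!*} the composition of the inverse of the equivalence j^* : C(X)_{w=0,i^*w≤−1,i^!w≥1} ≃ C(U)_{w=0,∂w≠0,1} with the inclusion into C(X)_{w=0}, one has an isomorphism of functors D_X ∘ j_{!*} ≅ j_{!*} ∘ D_U on C(U)_{w=0,∂w≠0,1}. (Remark 0Ca.) -/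
set_option linter.unusedVariables false

open CategoryTheory Limits Pretriangulated

universe w₁ w₂ w₃ w₄ v₁ v₂ v₃ v₄ u₁ u₂ u₃ u₄

variable {CU : Type*} [Category CU] [HasZeroObject CU] [Preadditive CU]
  [HasShift CU ℤ] [∀ n : ℤ, (shiftFunctor CU n).Additive] [Pretriangulated CU]
variable {CX : Type*} [Category CX] [HasZeroObject CX] [Preadditive CX]
  [HasShift CX ℤ] [∀ n : ℤ, (shiftFunctor CX n).Additive] [Pretriangulated CX]
variable {CZ : Type*} [Category CZ] [HasZeroObject CZ] [Preadditive CZ]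
  [HasShift CZ ℤ] [∀ n : ℤ, (shiftFunctor CZ n).Additive] [Pretriangulated CZ]

/- The six gluing functors: `jl = j_!`, `js = j^*`, `jr = j_*`,
   `il = i^*`, `im = i_*`, `ir = i^!`; all of them are exact. -/
variable (jl : CU ⥤ CX) (js : CX ⥤ CU) (jr : CU ⥤ CX)
  (il : CX ⥤ CZ) (im : CZ ⥤ CX) (ir : CX ⥤ CZ)
  [jl.CommShift ℤ] [jl.IsTriangulated] [js.CommShift ℤ] [js.IsTriangulated]
  [jr.CommShift ℤ] [jr.IsTriangulated] [il.CommShift ℤ] [il.IsTriangulated]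
  [im.CommShift ℤ] [im.IsTriangulated] [ir.CommShift ℤ] [ir.IsTriangulated]
  [im.Full] [im.Faithful]
variable (adj₁ : jl ⊣ js) (adj₂ : js ⊣ jr) (adj₃ : il ⊣ im) (adj₄ : im ⊣ ir)

variable (wU : WeightStructure CU) (wX : WeightStructure CX) (wZ : WeightStructure CZ)

namespace WeightStructure

variable {C : Type*} [Category C] [HasZeroObject C] [Preadditive C]
    [HasShift C ℤ] [∀ n : ℤ, (shiftFunctor C n).Additive] [Pretriangulated C]

lemma le_congr' (w : WeightStructure C) {m n : ℤ} (h : m = n) {X : C}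
    (hX : w.le (X⟦m⟧)) : w.le (X⟦n⟧) := by subst h; exact hX

lemma ge_congr' (w : WeightStructure C) {m n : ℤ} (h : m = n) {X : C}
    (hX : w.ge (X⟦m⟧)) : w.ge (X⟦n⟧) := by subst h; exact hX

end WeightStructure

open CategoryTheory.Pretriangulated.Opposite

section DualAux

variable {C : Type*} [Category C] [HasZeroObject C] [Preadditive C]
    [HasShift C ℤ] [∀ n : ℤ, (shiftFunctor C n).Additive] [Pretriangulated C]

/-- For a contravariant shift-commuting functor, `D(B[m]) ≅ (D B)[n]` when `n + m = 0`. -/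
noncomputable def dualShiftIso (D : Cᵒᵖ ⥤ C) [D.CommShift ℤ] (B : C) (n m : ℤ)
    (h : n + m = 0) : D.obj (Opposite.op (B⟦m⟧)) ≅ (D.obj (Opposite.op B))⟦n⟧ :=
  D.mapIso ((shiftFunctorOpIso C n m h).app (Opposite.op B)).symm ≪≫
    (D.commShiftIso n).app (Opposite.op B)

/-- Dualizing an object without weights `0, 1` and shifting by `[1]` again yields an
object without weights `0, 1`. -/
lemma dual_withoutWeights (w : WeightStructure C) (D : Cᵒᵖ ⥤ C) [D.CommShift ℤ]
    [D.IsTriangulated]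
    (hD₁ : ∀ X : C, w.ge X → w.le (D.obj (Opposite.op X)))
    (hD₂ : ∀ X : C, w.le X → w.ge (D.obj (Opposite.op X)))
    (M : C) (hM : w.WithoutWeights 0 1 M)
    (X : C) (e : X ≅ (D.obj (Opposite.op M))⟦(1 : ℤ)⟧) :
    w.WithoutWeights 0 1 X := by
  obtain ⟨A, B, f, g, h, hT, hA, hB⟩ := hM
  have hTop := op_distinguished _ hT
  have hTD := D.map_distinguished _ hTop
  have hS := rot_of_distTriang _ (rot_of_distTriang _ (rot_of_distTriang _ hTD))
  set S := ((D.mapTriangle.obj ((triangleOpEquivalence C).functor.obj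
    (Opposite.op (Triangle.mk f g h)))).rotate.rotate.rotate) with hSdef
  refine ⟨(D.obj (Opposite.op B))⟦(1 : ℤ)⟧, (D.obj (Opposite.op A))⟦(1 : ℤ)⟧,
    S.mor₁ ≫ e.inv, e.hom ≫ S.mor₂, S.mor₃, ?_, ?_, ?_⟩
  · have c1 : (S.mor₁ ≫ e.inv) ≫ e.hom = 𝟙 S.obj₁ ≫ S.mor₁ := by
      rw [Category.id_comp]
      exact (Category.assoc S.mor₁ e.inv e.hom).trans
        ((congrArg (fun x => S.mor₁ ≫ x) e.inv_hom_id).trans (Category.comp_id S.mor₁))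
    have c3 : S.mor₃ ≫ (shiftFunctor C (1 : ℤ)).map (𝟙 S.obj₁) = 𝟙 S.obj₃ ≫ S.mor₃ := by simp
    exact isomorphic_distinguished _ hS _
      (Triangle.isoMk _ _ (Iso.refl _) e (Iso.refl _) c1
        (by change (e.hom ≫ S.mor₂) ≫ 𝟙 _ = e.hom ≫ S.mor₂
            simp only [Category.comp_id]) c3)
  · have h1 : w.ge (B⟦(-2 : ℤ)⟧) := w.ge_congr' (by norm_num) hB
    have h2 : w.le ((D.obj (Opposite.op B))⟦(2 : ℤ)⟧) :=
      w.le_iso (dualShiftIso D B 2 (-2) (by norm_num)) (hD₁ _ h1)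
    have h3 : w.le (((D.obj (Opposite.op B))⟦(1 : ℤ)⟧)⟦(1 : ℤ)⟧) :=
      w.le_iso ((shiftFunctorAdd' C 1 1 2 rfl).app _) h2
    exact w.le_congr' (show (1 : ℤ) = -(0 - 1) by norm_num) h3
  · have h1 : w.le (A⟦(1 : ℤ)⟧) := w.le_congr' (show (-(0 - 1) : ℤ) = 1 by norm_num) hA
    have h3 : w.ge ((D.obj (Opposite.op A))⟦(-1 : ℤ)⟧) :=
      w.ge_iso (dualShiftIso D A (-1) 1 (by norm_num)) (hD₂ _ h1)
    have h4 : w.ge (((D.obj (Opposite.op A))⟦(1 : ℤ)⟧)⟦(-2 : ℤ)⟧) :=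
      w.ge_iso ((shiftFunctorAdd' C 1 (-2) (-1) (by norm_num)).app _) h3
    exact w.ge_congr' (show (-2 : ℤ) = -(1 + 1) by norm_num) h4

end DualAux

/-- In a gluing situation, the cone of `j_! N → j_* N` computes both `i_* i^* j_* N`
and `(i_* i^! j_! N)[1]`. -/
lemma glued_cone_iso (hglue : IsGluing jl js jr il im ir adj₁ adj₂ adj₃ adj₄) (N : CU) :
    Nonempty ((ir.obj (jl.obj N))⟦(1 : ℤ)⟧ ≅ il.obj (jr.obj N)) := by
  haveI := hglue.unit_iso
  haveI := hglue.counit_iso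
  obtain ⟨δ₁, h₁⟩ := hglue.tri₂ (jl.obj N)
  obtain ⟨δ₂, h₂⟩ := hglue.tri₁ (jr.obj N)
  have E' : jl.map (adj₂.counit.app N) ≫ adj₂.unit.app (jl.obj N)
      = adj₁.counit.app (jr.obj N) ≫ jr.map (adj₁.unit.app N) := by
    apply (adj₁.homEquiv _ _).injective
    have n1 := adj₁.unit.naturality (adj₂.counit.app N)
    have n2 := adj₂.counit.naturality (adj₁.unit.app N)
    dsimp at n1 n2
    have h5 : adj₂.counit.app (js.obj (jl.obj N)) ≫ js.map (adj₂.unit.app (jl.obj N))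
        = 𝟙 _ := by
      rw [← cancel_mono (adj₂.counit.app (js.obj (jl.obj N)))]
      simp
    simp only [Adjunction.homEquiv_unit, Functor.map_comp, Functor.comp_obj, Functor.id_obj]
    calc adj₁.unit.app (js.obj (jr.obj N)) ≫ js.map (jl.map (adj₂.counit.app N)) ≫
            js.map (adj₂.unit.app (jl.obj N))
        = (adj₂.counit.app N ≫ adj₁.unit.app N) ≫ js.map (adj₂.unit.app (jl.obj N)) := by
          rw [← Category.assoc, ← n1]
      _ = js.map (jr.map (adj₁.unit.app N)) ≫ adj₂.counit.app (js.obj (jl.obj N)) ≫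
            js.map (adj₂.unit.app (jl.obj N)) := by rw [← n2, Category.assoc]
      _ = js.map (jr.map (adj₁.unit.app N)) := by rw [h5]; simp
      _ = adj₁.unit.app (js.obj (jr.obj N)) ≫ js.map (adj₁.counit.app (jr.obj N)) ≫
            js.map (jr.map (adj₁.unit.app N)) := by
          simp
  have comm : adj₂.unit.app (jl.obj N) ≫ jr.map (inv (adj₁.unit.app N))
      = jl.map (inv (adj₂.counit.app N)) ≫ adj₁.counit.app (jr.obj N) := by
    rw [← cancel_epi (jl.map (adj₂.counit.app N)), ← cancel_mono (jr.map (adj₁.unit.app N))]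
    simp only [Category.assoc, ← Functor.map_comp, IsIso.inv_hom_id, IsIso.hom_inv_id,
      Functor.map_id, Category.comp_id, Category.id_comp, Functor.map_inv]
    simpa using E'
  have e := isoTriangleOfIso₁₂
    (Triangle.mk (adj₄.counit.app (jl.obj N)) (adj₂.unit.app (jl.obj N)) δ₁).rotate
    (Triangle.mk (adj₁.counit.app (jr.obj N)) (adj₃.unit.app (jr.obj N)) δ₂)
    (rot_of_distTriang _ h₁) h₂
    (jl.mapIso (asIso (adj₂.counit.app N)).symm)
    (jr.mapIso (asIso (adj₁.unit.app N)).symm)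
    (by exact comm)
  exact ⟨im.preimageIso (((im.commShiftIso (1 : ℤ)).app _) ≪≫ Triangle.π₃.mapIso e)⟩

/-- From the compatibility of `D_X`, `D_Z` with `i_*`, one deduces `i^* ∘ D_X ≅ D_Z ∘ (i^!)ᵒᵖ`
by uniqueness of left adjoints. -/
lemma il_dx_iso (adjm : il ⊣ im) (adjr : im ⊣ ir)
    (DX : CXᵒᵖ ⥤ CX) (DZ : CZᵒᵖ ⥤ CZ) [DX.IsEquivalence] [DZ.IsEquivalence]
    (e₃ : im.op ⋙ DX ≅ DZ ⋙ im) : Nonempty (DX ⋙ il ≅ ir.op ⋙ DZ) := by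
  let EX := DX.asEquivalence
  let EZ := DZ.asEquivalence
  have β : im ⋙ EX.inverse ≅ EZ.inverse ⋙ im.op :=
    Functor.isoWhiskerRight EZ.counitIso.symm (im ⋙ EX.inverse) ≪≫
      Functor.isoWhiskerLeft EZ.inverse (Functor.isoWhiskerRight e₃.symm EX.inverse ≪≫
        Functor.isoWhiskerLeft im.op EX.unitIso.symm)
  exact ⟨Adjunction.natIsoOfRightAdjointNatIso (EX.toAdjunction.comp adjm)
    ((adjr.op).comp EZ.toAdjunction) β⟩


open CategoryTheory.Pretriangulated.Opposite in
/-- **Remark 0Ca.** Given contravariant exact auto-equivalences `D_U`, `D_X`, `D_Z`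
compatible with the gluing and with the weight structures, `D_U` preserves
`C(U)_{w=0, ∂w ≠ 0,1}`, `D_X` preserves `C(X)_{w=0, i^*w ≤ -1, i^!w ≥ 1}`, and the
intermediate extension commutes with local duality: if `M = j_{!*} M_U` (i.e. `M` lies in
`C(X)_{w=0, i^*w ≤ -1, i^!w ≥ 1}` and `j^* M ≅ M_U`), then `D_X M = j_{!*} (D_U M_U)`. -/
theorem duality_commutes_with_intermediate_extension
    (hglue : IsGluing jl js jr il im ir adj₁ adj₂ adj₃ adj₄)
    (hw : GluedWeights jl js jr il im ir wU wX wZ)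
    (DU : CUᵒᵖ ⥤ CU) (DX : CXᵒᵖ ⥤ CX) (DZ : CZᵒᵖ ⥤ CZ)
    [DU.IsEquivalence] [DX.IsEquivalence] [DZ.IsEquivalence]
    [DU.CommShift ℤ] [DU.IsTriangulated]
    [DX.CommShift ℤ] [DX.IsTriangulated]
    [DZ.CommShift ℤ] [DZ.IsTriangulated]
    (e₁ : jr.op ⋙ DX ≅ DU ⋙ jl)
    (e₂ : js.op ⋙ DU ≅ DX ⋙ js)
    (e₃ : im.op ⋙ DX ≅ DZ ⋙ im)
    (e₄ : il.op ⋙ DZ ≅ DX ⋙ ir)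
    (hDU₁ : ∀ X : CU, wU.ge X → wU.le (DU.obj (Opposite.op X)))
    (hDU₂ : ∀ X : CU, wU.le X → wU.ge (DU.obj (Opposite.op X)))
    (hDX₁ : ∀ X : CX, wX.ge X → wX.le (DX.obj (Opposite.op X)))
    (hDX₂ : ∀ X : CX, wX.le X → wX.ge (DX.obj (Opposite.op X)))
    (hDZ₁ : ∀ X : CZ, wZ.ge X → wZ.le (DZ.obj (Opposite.op X)))
    (hDZ₂ : ∀ X : CZ, wZ.le X → wZ.ge (DZ.obj (Opposite.op X))) :
    (∀ MU : CU, wU.heart MU ∧ wZ.WithoutWeights 0 1 (il.obj (jr.obj MU)) →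
      wU.heart (DU.obj (Opposite.op MU)) ∧
        wZ.WithoutWeights 0 1 (il.obj (jr.obj (DU.obj (Opposite.op MU))))) ∧
    (∀ M : CX, (wX.heart M ∧ wZ.leW (-1) (il.obj M) ∧ wZ.geW 1 (ir.obj M)) →
      (wX.heart (DX.obj (Opposite.op M)) ∧
        wZ.leW (-1) (il.obj (DX.obj (Opposite.op M))) ∧
        wZ.geW 1 (ir.obj (DX.obj (Opposite.op M))))) ∧
    (∀ (MU : CU) (M : CX),
      (wU.heart MU ∧ wZ.WithoutWeights 0 1 (il.obj (jr.obj MU))) →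
      (wX.heart M ∧ wZ.leW (-1) (il.obj M) ∧ wZ.geW 1 (ir.obj M)) →
      Nonempty (js.obj M ≅ MU) →
      Nonempty (js.obj (DX.obj (Opposite.op M)) ≅ DU.obj (Opposite.op MU))) := by
  obtain ⟨α⟩ := il_dx_iso il im ir adj₃ adj₄ DX DZ e₃
  refine ⟨?_, ?_, ?_⟩
  · rintro MU ⟨hMU, hwMU⟩
    refine ⟨⟨hDU₁ MU hMU.2, hDU₂ MU hMU.1⟩, ?_⟩
    obtain ⟨coneIso⟩ := glued_cone_iso jl js jr il im ir adj₁ adj₂ adj₃ adj₄ hglue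
      (DU.obj (Opposite.op MU))
    refine dual_withoutWeights wZ DZ hDZ₁ hDZ₂ (il.obj (jr.obj MU)) hwMU _
      (coneIso.symm ≪≫ (shiftFunctor CZ (1 : ℤ)).mapIso
        (ir.mapIso (e₁.app (Opposite.op MU)).symm ≪≫ (e₄.app (Opposite.op (jr.obj MU))).symm))
  · rintro M ⟨hh, hle, hge⟩
    refine ⟨⟨hDX₁ M hh.2, hDX₂ M hh.1⟩, ?_, ?_⟩
    · have h2 : wZ.le (DZ.obj (Opposite.op ((ir.obj M)⟦(-1 : ℤ)⟧))) := hDZ₁ _ hge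
      have h3 : wZ.le ((DZ.obj (Opposite.op (ir.obj M)))⟦(1 : ℤ)⟧) :=
        wZ.le_iso (dualShiftIso DZ (ir.obj M) 1 (-1) (by norm_num)) h2
      have h4 : wZ.le ((il.obj (DX.obj (Opposite.op M)))⟦(1 : ℤ)⟧) :=
        wZ.le_iso ((shiftFunctor CZ (1 : ℤ)).mapIso (α.app (Opposite.op M)).symm) h3
      exact wZ.le_congr' (show (1 : ℤ) = -(-1) by norm_num) h4
    · have h1 : wZ.le ((il.obj M)⟦(1 : ℤ)⟧) :=
        wZ.le_congr' (show (-(-1) : ℤ) = 1 by norm_num) hle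
      have h3 : wZ.ge ((DZ.obj (Opposite.op (il.obj M)))⟦(-1 : ℤ)⟧) :=
        wZ.ge_iso (dualShiftIso DZ (il.obj M) (-1) 1 (by norm_num)) (hDZ₂ _ h1)
      have h4 : wZ.ge ((ir.obj (DX.obj (Opposite.op M)))⟦(-1 : ℤ)⟧) :=
        wZ.ge_iso ((shiftFunctor CZ (-1 : ℤ)).mapIso (e₄.app (Opposite.op M))) h3
      exact wZ.ge_congr' (show (-1 : ℤ) = -1 by norm_num) h4
  · rintro MU M hMU hM ⟨i⟩
    exact ⟨(e₂.app (Opposite.op M)).symm ≪≫ (DU.mapIso i.op).symm⟩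
end

section
/- Let C(U), C(X), C(Z) be pretriangulated categories related by gluing and equipped with weight structures compatible with the gluing. Let M ∈ C(X)_{w=0,i^*w≤−1,i^!w≥1} and N ∈ C(Z)_{w=0}, and suppose there exist morphisms p : i_* N → M and q : M → i_* N with q ∘ p = id_{i_* N}. Then N ≅ 0. In other words, objects of C(X)_{w=0,i^*w≤−1,i^!w≥1} admit no non-zero direct factors belonging to the image of the heart C(Z)_{w=0} under i_*. (Remark 0D (a).) -/
set_option linter.unusedVariables false

open CategoryTheory Limits Pretriangulated

universe w₁ w₂ w₃ w₄ v₁ v₂ v₃ v₄ u₁ u₂ u₃ u₄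

variable {CU : Type*} [Category CU] [HasZeroObject CU] [Preadditive CU]
  [HasShift CU ℤ] [∀ n : ℤ, (shiftFunctor CU n).Additive] [Pretriangulated CU]
variable {CX : Type*} [Category CX] [HasZeroObject CX] [Preadditive CX]
  [HasShift CX ℤ] [∀ n : ℤ, (shiftFunctor CX n).Additive] [Pretriangulated CX]
variable {CZ : Type*} [Category CZ] [HasZeroObject CZ] [Preadditive CZ]
  [HasShift CZ ℤ] [∀ n : ℤ, (shiftFunctor CZ n).Additive] [Pretriangulated CZ]

/- The six gluing functors: `jl = j_!`, `js = j^*`, `jr = j_*`,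
   `il = i^*`, `im = i_*`, `ir = i^!`; all of them are exact. -/
variable (jl : CU ⥤ CX) (js : CX ⥤ CU) (jr : CU ⥤ CX)
  (il : CX ⥤ CZ) (im : CZ ⥤ CX) (ir : CX ⥤ CZ)
  [jl.CommShift ℤ] [jl.IsTriangulated] [js.CommShift ℤ] [js.IsTriangulated]
  [jr.CommShift ℤ] [jr.IsTriangulated] [il.CommShift ℤ] [il.IsTriangulated]
  [im.CommShift ℤ] [im.IsTriangulated] [ir.CommShift ℤ] [ir.IsTriangulated]
  [im.Full] [im.Faithful]
variable (adj₁ : jl ⊣ js) (adj₂ : js ⊣ jr) (adj₃ : il ⊣ im) (adj₄ : im ⊣ ir)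

variable (wU : WeightStructure CU) (wX : WeightStructure CX) (wZ : WeightStructure CZ)

/-- **Remark 0D (a).** An object of `C(X)_{w=0, i^*w ≤ -1, i^!w ≥ 1}` admits no non-zero
direct factor belonging to the image under `i_*` of the heart `C(Z)_{w=0}`: if
`i_* N → M → i_* N` composes to the identity for some `N ∈ C(Z)_{w=0}`, then `N ≅ 0`. -/
theorem no_nonzero_direct_factor_from_closed_part
    (hglue : IsGluing jl js jr il im ir adj₁ adj₂ adj₃ adj₄)
    (hw : GluedWeights jl js jr il im ir wU wX wZ)
    (M : CX) (hM : wX.heart M ∧ wZ.leW (-1) (il.obj M) ∧ wZ.geW 1 (ir.obj M))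
    (N : CZ) (hN : wZ.heart N)
    (p : im.obj N ⟶ M) (q : M ⟶ im.obj N) (hpq : p ≫ q = 𝟙 (im.obj N)) :
    IsZero N := by
  obtain ⟨hMheart, hil, hir⟩ := hM
  have hu : IsIso (adj₄.unit.app N) := inferInstance
  set s : N ⟶ ir.obj M := adj₄.unit.app N ≫ ir.map p with hs
  set r : ir.obj M ⟶ N := ir.map q ≫ inv (adj₄.unit.app N) with hr
  have hsr : s ≫ r = 𝟙 N := by
    rw [hs, hr, Category.assoc, ← Category.assoc (ir.map p), ← ir.map_comp, hpq,
      ir.map_id, Category.id_comp, IsIso.hom_inv_id]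
  have hge : wZ.ge (N⟦(-1 : ℤ)⟧) :=
    wZ.ge_retract ((shiftFunctor CZ (-1 : ℤ)).map s) ((shiftFunctor CZ (-1 : ℤ)).map r)
      (by rw [← (shiftFunctor CZ (-1 : ℤ)).map_comp, hsr, (shiftFunctor CZ (-1 : ℤ)).map_id]) hir
  have h0 : (shiftNegShift N (1 : ℤ)).inv = 0 := wZ.orth _ hN.1 hge
  rw [Limits.IsZero.iff_id_eq_zero, ← (shiftNegShift N (1 : ℤ)).inv_hom_id, h0, zero_comp]
end

section
/- Let C(U), C(X), C(Z) be pretriangulated categories related by gluing and equipped with weight structures compatible with the gluing. Let M_U ∈ C(U)_{w=0,∂w≠0,1}, let M ∈ C(X)_{w=0,i^*w≤−1,i^!w≥1} be an object with j^* M ≅ M_U (i.e. M is the intermediate extension j_{!*} M_U), and let α ≤ 0 and β ≥ 1 be integers. Then i^* j_* M_U is without weights α, α+1, …, β if and only if i^* M ∈ C(Z)_{w≤α−1} and i^! M ∈ C(Z)_{w≥β}. (Theorem 0E (b).) -/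
set_option linter.unusedVariables false

open CategoryTheory Limits Pretriangulated

universe w₁ w₂ w₃ w₄ v₁ v₂ v₃ v₄ u₁ u₂ u₃ u₄

namespace WeightStructure

section Helpers

variable {C : Type*} [Category C] [HasZeroObject C] [Preadditive C]
    [HasShift C ℤ] [∀ n : ℤ, (shiftFunctor C n).Additive] [Pretriangulated C]
    (w : WeightStructure C)

lemma ge_shift_nat (n : ℕ) {X : C} (h : w.ge X) : w.ge (X⟦(n : ℤ)⟧) := by
  induction n with
  | zero => exact w.ge_iso (((shiftFunctorZero C ℤ).app X).symm) h
  | succ k ih =>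
    exact w.ge_iso
      (((shiftFunctorAdd' C (k : ℤ) 1 ((k + 1 : ℕ) : ℤ) (by push_cast; ring)).app X).symm)
      (w.ge_shift _ ih)

lemma le_shift_nat (n : ℕ) {X : C} (h : w.le X) : w.le (X⟦(-(n : ℤ))⟧) := by
  induction n with
  | zero => exact w.le_iso (((shiftFunctorZero C ℤ).app X).symm) h
  | succ k ih =>
    exact w.le_iso
      (((shiftFunctorAdd' C (-(k : ℤ)) (-1) (-((k + 1 : ℕ) : ℤ)) (by push_cast; ring)).app X).symm)
      (w.le_shift _ ih)

lemma leW_iso {X Y : C} (e : X ≅ Y) {n : ℤ} (h : w.leW n X) : w.leW n Y :=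
  w.le_iso ((shiftFunctor C (-n)).mapIso e) h

lemma geW_iso {X Y : C} (e : X ≅ Y) {n : ℤ} (h : w.geW n X) : w.geW n Y :=
  w.ge_iso ((shiftFunctor C (-n)).mapIso e) h

lemma leW_shift {n : ℤ} {X : C} (h : w.leW n X) (k : ℤ) : w.leW (n + k) (X⟦k⟧) :=
  w.le_iso ((shiftFunctorAdd' C k (-(n + k)) (-n) (by ring)).app X) h

lemma geW_shift {n : ℤ} {X : C} (h : w.geW n X) (k : ℤ) : w.geW (n + k) (X⟦k⟧) :=
  w.ge_iso ((shiftFunctorAdd' C k (-(n + k)) (-n) (by ring)).app X) h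

lemma leW_retract {X Y : C} (s : X ⟶ Y) (r : Y ⟶ X) (hsr : s ≫ r = 𝟙 X) {n : ℤ}
    (h : w.leW n Y) : w.leW n X :=
  w.le_retract ((shiftFunctor C (-n)).map s) ((shiftFunctor C (-n)).map r)
    (by rw [← Functor.map_comp, hsr, CategoryTheory.Functor.map_id]) h

lemma geW_retract {X Y : C} (s : X ⟶ Y) (r : Y ⟶ X) (hsr : s ≫ r = 𝟙 X) {n : ℤ}
    (h : w.geW n Y) : w.geW n X :=
  w.ge_retract ((shiftFunctor C (-n)).map s) ((shiftFunctor C (-n)).map r)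
    (by rw [← Functor.map_comp, hsr, CategoryTheory.Functor.map_id]) h

/-- Orthogonality: there are no nonzero maps from weights `≤ a` to weights `≥ b` when
`a + 1 ≤ b`. -/
lemma orth' {a b : ℤ} (hab : a + 1 ≤ b) {X Y : C} (hX : w.leW a X) (hY : w.geW b Y)
    (f : X ⟶ Y) : f = 0 := by
  have hZ : w.ge (Y⟦-a - 1⟧) := by
    have h1 := w.ge_shift_nat (b - a - 1).toNat hY
    exact w.ge_iso
      (((shiftFunctorAdd' C (-b) ((b - a - 1).toNat : ℤ) (-a - 1)
        (by rw [Int.toNat_of_nonneg (by omega)]; ring)).app Y).symm) h1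
  have e : Y⟦-a⟧ ≅ (Y⟦-a - 1⟧)⟦(1 : ℤ)⟧ := (shiftFunctorAdd' C (-a - 1) 1 (-a) (by ring)).app Y
  have h0 : (shiftFunctor C (-a)).map f ≫ e.hom = 0 := w.orth _ hX hZ
  have h1 : (shiftFunctor C (-a)).map f = 0 := by
    rw [← cancel_mono e.hom, zero_comp]
    exact h0
  exact (shiftFunctor C (-a)).map_injective (by rw [Functor.map_zero]; exact h1)

end Helpers

end WeightStructure

variable {CU : Type*} [Category CU] [HasZeroObject CU] [Preadditive CU]
  [HasShift CU ℤ] [∀ n : ℤ, (shiftFunctor CU n).Additive] [Pretriangulated CU]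
variable {CX : Type*} [Category CX] [HasZeroObject CX] [Preadditive CX]
  [HasShift CX ℤ] [∀ n : ℤ, (shiftFunctor CX n).Additive] [Pretriangulated CX]
variable {CZ : Type*} [Category CZ] [HasZeroObject CZ] [Preadditive CZ]
  [HasShift CZ ℤ] [∀ n : ℤ, (shiftFunctor CZ n).Additive] [Pretriangulated CZ]

/- The six gluing functors: `jl = j_!`, `js = j^*`, `jr = j_*`,
   `il = i^*`, `im = i_*`, `ir = i^!`; all of them are exact. -/
variable (jl : CU ⥤ CX) (js : CX ⥤ CU) (jr : CU ⥤ CX)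
  (il : CX ⥤ CZ) (im : CZ ⥤ CX) (ir : CX ⥤ CZ)
  [jl.CommShift ℤ] [jl.IsTriangulated] [js.CommShift ℤ] [js.IsTriangulated]
  [jr.CommShift ℤ] [jr.IsTriangulated] [il.CommShift ℤ] [il.IsTriangulated]
  [im.CommShift ℤ] [im.IsTriangulated] [ir.CommShift ℤ] [ir.IsTriangulated]
  [im.Full] [im.Faithful]
variable (adj₁ : jl ⊣ js) (adj₂ : js ⊣ jr) (adj₃ : il ⊣ im) (adj₄ : im ⊣ ir)

variable (wU : WeightStructure CU) (wX : WeightStructure CX) (wZ : WeightStructure CZ)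

/-- **Theorem 0E (b).** Let `M_U ∈ C(U)_{w=0, ∂w ≠ 0,1}` and let
`M ∈ C(X)_{w=0, i^*w ≤ -1, i^!w ≥ 1}` with `j^* M ≅ M_U` (i.e. `M = j_{!*} M_U`). Let
`α ≤ 0` and `β ≥ 1` be integers. Then `i^* j_* M_U` is without weights `α, α+1, …, β`
if and only if `i^* M ∈ C(Z)_{w ≤ α-1}` and `i^! M ∈ C(Z)_{w ≥ β}`. -/
theorem weights_avoided_iff_bounds_on_intermediate_extension
    (hglue : IsGluing jl js jr il im ir adj₁ adj₂ adj₃ adj₄)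
    (hw : GluedWeights jl js jr il im ir wU wX wZ)
    (MU : CU) (hMU : wU.heart MU ∧ wZ.WithoutWeights 0 1 (il.obj (jr.obj MU)))
    (M : CX) (hM : wX.heart M ∧ wZ.leW (-1) (il.obj M) ∧ wZ.geW 1 (ir.obj M))
    (hiso : Nonempty (js.obj M ≅ MU))
    (α β : ℤ) (hα : α ≤ 0) (hβ : 1 ≤ β) :
    wZ.WithoutWeights α β (il.obj (jr.obj MU)) ↔
      (wZ.leW (α - 1) (il.obj M) ∧ wZ.geW β (ir.obj M)) := by
  obtain ⟨hMheart, hle, hge⟩ := hM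
  obtain ⟨δ, hδ⟩ := hglue.tri₂ M
  have hmap := il.map_distinguished _ hδ
  have : IsIso adj₃.counit := Adjunction.counit_isIso_of_R_fully_faithful adj₃
  let isoE : il.obj (im.obj (ir.obj M)) ≅ ir.obj M := asIso (adj₃.counit.app (ir.obj M))
  let eN : il.obj (jr.obj (js.obj M)) ≅ il.obj (jr.obj MU) := il.mapIso (jr.mapIso hiso.some)
  -- the localization triangle `i^* i_* i^! M → i^* M → i^* j_* M_U → ⋯`
  let f₁ : il.obj (im.obj (ir.obj M)) ⟶ il.obj M := il.map (adj₄.counit.app M)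
  let g₁ : il.obj M ⟶ il.obj (jr.obj MU) := il.map (adj₂.unit.app M) ≫ eN.hom
  let h₁ : il.obj (jr.obj MU) ⟶ (il.obj (im.obj (ir.obj M)))⟦(1 : ℤ)⟧ :=
    eN.inv ≫ il.map δ ≫ (il.commShiftIso (1 : ℤ)).hom.app (im.obj (ir.obj M))
  have hT : Triangle.mk f₁ g₁ h₁ ∈ distTriang CZ := by
    refine isomorphic_distinguished _ hmap _ ?_
    exact Triangle.isoMk _ _ (Iso.refl _) (Iso.refl _) eN.symm ((Category.comp_id _).trans (Category.id_comp _).symm)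
      (by erw [Category.assoc, Iso.hom_inv_id, Category.comp_id, Category.id_comp]; rfl)
      (by
        show h₁ ≫ (shiftFunctor CZ (1 : ℤ)).map (𝟙 (il.obj (im.obj (ir.obj M)))) =
          eN.inv ≫ il.map δ ≫ (il.commShiftIso (1 : ℤ)).hom.app (im.obj (ir.obj M))
        rw [CategoryTheory.Functor.map_id, Category.comp_id])
  have hTR : Triangle.mk g₁ h₁ (-(f₁⟦(1 : ℤ)⟧')) ∈ distTriang CZ := rot_of_distTriang _ hT
  have hE : wZ.geW 1 (il.obj (im.obj (ir.obj M))) := wZ.geW_iso isoE.symm hge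
  have hE1 : wZ.geW (1 + 1) ((il.obj (im.obj (ir.obj M)))⟦(1 : ℤ)⟧) := wZ.geW_shift hE 1
  constructor
  · rintro ⟨A, B, f, g, h, hS, hA, hB⟩
    -- lift `g₁` through `f`
    have hv1 : g₁ ≫ g = 0 :=
      wZ.orth' (show (-1 : ℤ) + 1 ≤ β + 1 by omega) hle hB (g₁ ≫ g)
    obtain ⟨a, ha⟩ : ∃ a : il.obj M ⟶ A, g₁ = a ≫ f :=
      Triangle.coyoneda_exact₂ _ hS g₁ hv1
    -- lift `f` through `g₁`
    have hv2 : f ≫ h₁ = 0 :=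
      wZ.orth' (show (α - 1) + 1 ≤ 1 + 1 by omega) hA hE1 (f ≫ h₁)
    obtain ⟨b, hb⟩ : ∃ b : A ⟶ il.obj M, f = b ≫ g₁ :=
      Triangle.coyoneda_exact₂ _ hTR f hv2
    -- `a ≫ b = 𝟙`
    have hu : (𝟙 (il.obj M) - a ≫ b) ≫ g₁ = 0 := by
      rw [Preadditive.sub_comp, Category.id_comp, Category.assoc, ← hb, ← ha, sub_self]
    obtain ⟨e₀, he₀⟩ := Triangle.coyoneda_exact₂ _ (inv_rot_of_distTriang _ hTR)
      (𝟙 (il.obj M) - a ≫ b) (by exact hu)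
    have hgeE : wZ.geW (1 + 1 + -1) (((il.obj (im.obj (ir.obj M)))⟦(1 : ℤ)⟧)⟦(-1 : ℤ)⟧) :=
      wZ.geW_shift hE1 (-1)
    have he0 : e₀ = 0 :=
      wZ.orth' (show (-1 : ℤ) + 1 ≤ 1 + 1 + -1 by omega) hle hgeE e₀
    have hab1 : a ≫ b = 𝟙 (il.obj M) := by
      rw [he0, zero_comp] at he₀
      exact (sub_eq_zero.mp he₀).symm
    have hleft : wZ.leW (α - 1) (il.obj M) := wZ.leW_retract a b hab1 hA
    -- morphisms of triangles on the third objects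
    obtain ⟨c, hc⟩ : ∃ c : (il.obj (im.obj (ir.obj M)))⟦(1 : ℤ)⟧ ⟶ B, h₁ ≫ c = g := by
      obtain ⟨c₀, hc₀, -⟩ := Pretriangulated.complete_distinguished_triangle_morphism
        (Triangle.mk g₁ h₁ (-(f₁⟦(1 : ℤ)⟧'))) (Triangle.mk f g h) hTR hS a (𝟙 _)
        ((Category.comp_id _).trans ha)
      exact ⟨c₀, hc₀.trans (Category.id_comp _)⟩
    obtain ⟨d, hd⟩ : ∃ d : B ⟶ (il.obj (im.obj (ir.obj M)))⟦(1 : ℤ)⟧, g ≫ d = h₁ := by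
      obtain ⟨d₀, hd₀, -⟩ := Pretriangulated.complete_distinguished_triangle_morphism
        (Triangle.mk f g h) (Triangle.mk g₁ h₁ (-(f₁⟦(1 : ℤ)⟧'))) hS hTR b (𝟙 _)
        ((Category.comp_id _).trans hb)
      exact ⟨d₀, hd₀.trans (Category.id_comp _)⟩
    have hv3 : h₁ ≫ (𝟙 ((il.obj (im.obj (ir.obj M)))⟦(1 : ℤ)⟧) - c ≫ d) = 0 := by
      rw [Preadditive.comp_sub, Category.comp_id, ← Category.assoc, hc, hd, sub_self]
    obtain ⟨e₁, he₁⟩ := Triangle.yoneda_exact₃ _ hTR _ hv3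
    have he1 : e₁ = 0 :=
      wZ.orth' (show (-1 + 1 : ℤ) + 1 ≤ 1 + 1 by omega) (wZ.leW_shift hle 1) hE1 e₁
    have hcd : c ≫ d = 𝟙 _ := by
      rw [he1, comp_zero] at he₁
      exact (sub_eq_zero.mp he₁).symm
    have hr : wZ.geW (β + 1) ((il.obj (im.obj (ir.obj M)))⟦(1 : ℤ)⟧) := wZ.geW_retract c d hcd hB
    have h5 := wZ.geW_shift hr (-1)
    rw [show β + 1 + -1 = β by ring] at h5
    have isoE1 : ((il.obj (im.obj (ir.obj M)))⟦(1 : ℤ)⟧)⟦(-1 : ℤ)⟧ ≅ ir.obj M :=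
      ((shiftFunctorCompIsoId CZ (1 : ℤ) (-1 : ℤ) (by ring)).app (il.obj (im.obj (ir.obj M)))).trans isoE
    exact ⟨hleft, wZ.geW_iso isoE1 h5⟩
  · rintro ⟨h1, h2⟩
    refine ⟨il.obj M, (il.obj (im.obj (ir.obj M)))⟦(1 : ℤ)⟧, g₁, h₁, -(f₁⟦(1 : ℤ)⟧'), hTR,
      h1, ?_⟩
    exact wZ.geW_shift (wZ.geW_iso isoE.symm h2) 1
end

section
/- Let C be a pretriangulated category with weight structure w. Then the inclusion ι_− : C_{w=0} → C_{w≤0,≠−1} admits a left adjoint Gr_0, and the inclusion ι_+ : C_{w=0} → C_{w≥0,≠1} admits a right adjoint Gr_0. For M ∈ C_{w≤0,≠−1} with weight filtration M_{≤−2} → M → M_0 → M_{≤−2}[1] avoiding weight −1 (so M_{≤−2} ∈ C_{w≤−2}, M_0 ∈ C_{w≥0}, and necessarily M_0 ∈ C_{w=0}), one has Gr_0 M ≅ M_0; dually, for M ∈ C_{w≥0,≠1} with weight filtration M_0 → M → M_{≥2} → M_0[1] avoiding weight 1, one has Gr_0 M ≅ M_0. The compositions Gr_0 ∘ ι_− and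 Gr_0 ∘ ι_+ are isomorphic to the identity of C_{w=0}. (Proposition 2F.) -/
set_option linter.unusedVariables false

open CategoryTheory Limits Pretriangulated

universe w₁ w₂ w₃ w₄ v₁ v₂ v₃ v₄ u₁ u₂ u₃ u₄

variable {C : Type*} [Category C] [HasZeroObject C] [Preadditive C]
  [HasShift C ℤ] [∀ n : ℤ, (shiftFunctor C n).Additive] [Pretriangulated C]

namespace GrZeroAux

open ZeroObject

variable {C : Type*} [Category C] [HasZeroObject C] [Preadditive C]
  [HasShift C ℤ] [∀ n : ℤ, (shiftFunctor C n).Additive] [Pretriangulated C]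

variable (w : WeightStructure C)

lemma leW_shift (n m : ℤ) (h : -n = m) {X : C} (hX : w.leW n X) : w.le (X⟦m⟧) := by
  subst h; exact hX

lemma geW_shift (n m : ℤ) (h : -n = m) {X : C} (hX : w.geW n X) : w.ge (X⟦m⟧) := by
  subst h; exact hX

variable {w}

lemma hom_zero_of_le_two {X N : C} (hX : w.le (X⟦(2:ℤ)⟧)) (hN : w.ge N) (f : X ⟶ N) :
    f = 0 := by
  apply (shiftFunctor C (2:ℤ)).map_injective
  rw [Functor.map_zero]
  have e := (shiftFunctorAdd' C (1:ℤ) 1 2 (by norm_num)).app N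
  have h0 : (shiftFunctor C (2:ℤ)).map f ≫ e.hom = 0 := w.orth _ hX (w.ge_shift N hN)
  rw [← cancel_mono e.hom, h0, zero_comp]

lemma hom_zero_of_le_two' {X N : C} (hX : w.le (X⟦(2:ℤ)⟧)) (hN : w.ge N)
    (f : X⟦(1:ℤ)⟧ ⟶ N) : f = 0 := by
  apply (shiftFunctor C (1:ℤ)).map_injective
  rw [Functor.map_zero]
  have e := (shiftFunctorAdd' C (1:ℤ) 1 2 (by norm_num)).app X
  have h0 : e.hom ≫ (shiftFunctor C (1:ℤ)).map f = 0 := w.orth _ hX hN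
  rw [← cancel_epi e.hom, h0, comp_zero]

lemma hom_zero_of_ge_one {N B : C} (hN : w.le N) (hB : w.ge (B⟦(-1:ℤ)⟧)) (f : N ⟶ B) :
    f = 0 := by
  have e := (shiftFunctorCompIsoId C (-1:ℤ) (1:ℤ) (by norm_num)).app B
  have h0 : f ≫ e.inv = 0 := w.orth _ hN hB
  rw [← cancel_mono e.inv, h0, zero_comp]

lemma hom_zero_of_ge_negshift {A Z : C} (hA : w.le A) (hZ : w.ge Z)
    (u : A⟦(-1:ℤ)⟧ ⟶ Z) : u = 0 := by
  apply (shiftFunctor C (1:ℤ)).map_injective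
  rw [Functor.map_zero]
  have e := (shiftFunctorCompIsoId C (-1:ℤ) (1:ℤ) (by norm_num)).app A
  have h0 : e.inv ≫ (shiftFunctor C (1:ℤ)).map u = 0 := w.orth _ hA hZ
  rw [← cancel_epi e.inv, h0, comp_zero]

lemma le_shift_one {A : C} (h : w.le (A⟦(2:ℤ)⟧)) : w.le (A⟦(1:ℤ)⟧) :=
  w.le_iso (((shiftFunctorAdd' C (2:ℤ) (-1) 1 (by norm_num)).app A).symm) (w.le_shift _ h)

lemma ge_shift_neg_one {B : C} (h : w.ge (B⟦(-2:ℤ)⟧)) : w.ge (B⟦(-1:ℤ)⟧) :=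
  w.ge_iso (((shiftFunctorAdd' C (-2:ℤ) 1 (-1) (by norm_num)).app B).symm) (w.ge_shift _ h)

lemma ge_dshift {B : C} (h : w.ge (B⟦(-2:ℤ)⟧)) : w.ge ((B⟦(-1:ℤ)⟧)⟦(-1:ℤ)⟧) :=
  w.ge_iso ((shiftFunctorAdd' C (-1:ℤ) (-1) (-2) (by norm_num)).app B) h

lemma ext_le {T : Triangle C} (hT : T ∈ distTriang C) (h1 : w.le T.obj₁)
    (h3 : w.le T.obj₃) : w.le T.obj₂ := by
  obtain ⟨A, B, f, g, h, hd, hA, hB⟩ := w.exists_weight_filtration T.obj₂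
  have hg : g = 0 := by
    have h12 : T.mor₁ ≫ g = 0 := hom_zero_of_ge_one h1 hB _
    obtain ⟨k, hk⟩ := Triangle.yoneda_exact₂ T hT g h12
    rw [hk, hom_zero_of_ge_one h3 hB k, comp_zero]
  obtain ⟨s, hs⟩ := Triangle.coyoneda_exact₂ _ hd (𝟙 T.obj₂) (by subst hg; exact comp_zero)
  exact w.le_retract s f hs.symm hA

lemma ext_ge {T : Triangle C} (hT : T ∈ distTriang C) (h1 : w.ge T.obj₁)
    (h3 : w.ge T.obj₃) : w.ge T.obj₂ := by
  obtain ⟨A, B, f, g, h, hd, hA, hB⟩ := w.exists_weight_filtration (T.obj₂⟦(1:ℤ)⟧)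
  have hd' := Triangle.shift_distinguished _ hd (-1 : ℤ)
  set T' := (Triangle.shiftFunctor C (-1:ℤ)).obj (Triangle.mk f g h) with hT'def
  have e := (shiftFunctorCompIsoId C (1:ℤ) (-1:ℤ) (by norm_num)).app T.obj₂
  have hm1 : T'.mor₁ = 0 := by
    have hv2 : (T'.mor₁ ≫ e.hom) ≫ T.mor₂ = 0 := hom_zero_of_ge_negshift hA h3 _
    obtain ⟨k, hk⟩ := Triangle.coyoneda_exact₂ T hT (T'.mor₁ ≫ e.hom) hv2
    have hk0 : k = 0 := hom_zero_of_ge_negshift hA h1 k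
    have hv : T'.mor₁ ≫ e.hom = 0 := by rw [hk, hk0, zero_comp]
    exact (cancel_mono e.hom).mp (hv.trans zero_comp.symm)
  obtain ⟨r, hr⟩ := Triangle.yoneda_exact₂ T' hd' (𝟙 T'.obj₂) (by rw [hm1, zero_comp])
  have hY' : w.ge T'.obj₂ := w.ge_retract T'.mor₂ r hr.symm hB
  exact w.ge_iso e hY'

lemma bij_left {A M M₀ : C} {f : A ⟶ M} {g : M ⟶ M₀} {h : M₀ ⟶ A⟦(1:ℤ)⟧}
    (hT : Triangle.mk f g h ∈ distTriang C) (hA : w.le (A⟦(2:ℤ)⟧)) (N : C) (hN : w.ge N) :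
    Function.Bijective (fun φ : M₀ ⟶ N => g ≫ φ) := by
  constructor
  · intro φ₁ φ₂ hfe
    dsimp only at hfe
    have h0 : g ≫ (φ₁ - φ₂) = 0 := by rw [Preadditive.comp_sub, hfe, sub_self]
    obtain ⟨k, hk⟩ := Triangle.yoneda_exact₃ _ hT (φ₁ - φ₂) h0
    have : φ₁ - φ₂ = 0 := by rw [hk, hom_zero_of_le_two' hA hN k]; exact comp_zero
    exact sub_eq_zero.mp this
  · intro ψ
    have h0 : f ≫ ψ = 0 := hom_zero_of_le_two hA hN _
    obtain ⟨φ, hφ⟩ := Triangle.yoneda_exact₂ _ hT ψ h0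
    exact ⟨φ, hφ.symm⟩

lemma bij_right {M₀ M B : C} {f : M₀ ⟶ M} {g : M ⟶ B} {h : B ⟶ M₀⟦(1:ℤ)⟧}
    (hT : Triangle.mk f g h ∈ distTriang C) (hB : w.ge (B⟦(-2:ℤ)⟧)) (N : C) (hN : w.le N) :
    Function.Bijective (fun φ : N ⟶ M₀ => φ ≫ f) := by
  constructor
  · intro φ₁ φ₂ hfe
    dsimp only at hfe
    have h0 : (φ₁ - φ₂) ≫ f = 0 := by rw [Preadditive.sub_comp, hfe, sub_self]
    obtain ⟨k, hk⟩ := Triangle.coyoneda_exact₂ _ (inv_rot_of_distTriang _ hT) (φ₁ - φ₂) h0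
    have hk0 : k = 0 := hom_zero_of_ge_one hN (ge_dshift hB) k
    have : φ₁ - φ₂ = 0 := by rw [hk, hk0]; exact zero_comp
    exact sub_eq_zero.mp this
  · intro ψ
    have h0 : ψ ≫ g = 0 := hom_zero_of_ge_one hN (ge_shift_neg_one hB) _
    obtain ⟨φ, hφ⟩ := Triangle.coyoneda_exact₂ _ hT ψ h0
    exact ⟨φ, hφ.symm⟩

lemma gr_left_data {M : C} (hM : w.le M ∧ w.WithoutWeights (-1) (-1) M) :
    ∃ (M₀ : C) (g : M ⟶ M₀), w.heart M₀ ∧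
      ∀ N, w.ge N → Function.Bijective (fun φ : M₀ ⟶ N => g ≫ φ) := by
  obtain ⟨A, B, f, g, h, hT, hA, hB⟩ := hM.2
  have hA2 : w.le (A⟦(2:ℤ)⟧) := leW_shift w _ 2 (by norm_num) hA
  have hB0 : w.ge B := by
    have := geW_shift w _ 0 (by norm_num) hB
    exact w.ge_iso ((shiftFunctorZero C ℤ).app B) this
  have hle : w.le B := ext_le (rot_of_distTriang _ hT) hM.1 (le_shift_one hA2)
  exact ⟨B, g, ⟨hle, hB0⟩, fun N hN => bij_left hT hA2 N hN⟩

lemma gr_right_data {M : C} (hM : w.ge M ∧ w.WithoutWeights 1 1 M) :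
    ∃ (M₀ : C) (f : M₀ ⟶ M), w.heart M₀ ∧
      ∀ N, w.le N → Function.Bijective (fun φ : N ⟶ M₀ => φ ≫ f) := by
  obtain ⟨M₀, B, f, g, h, hT, hA, hB⟩ := hM.2
  have hB2 : w.ge (B⟦(-2:ℤ)⟧) := geW_shift w _ (-2) (by norm_num) hB
  have hA0 : w.le M₀ := by
    have := leW_shift w _ 0 (by norm_num) hA
    exact w.le_iso ((shiftFunctorZero C ℤ).app M₀) this
  have hge : w.ge M₀ := ext_ge (inv_rot_of_distTriang _ hT) (ge_shift_neg_one hB2) hM.1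
  exact ⟨M₀, f, ⟨hA0, hge⟩, fun N hN => bij_right hT hB2 N hN⟩

variable (w)

lemma mem_left (M : ObjectProperty.FullSubcategory w.heart) :
    w.le M.obj ∧ w.WithoutWeights (-1) (-1) M.obj := by
  refine ⟨M.2.1, 0, M.obj, 0, 𝟙 M.obj, 0, contractible_distinguished₁ M.obj, ?_, ?_⟩
  · exact w.le_zero _ ((shiftFunctor C (-(-1-1:ℤ))).map_isZero (isZero_zero C))
  · show w.ge (M.obj⟦(-(-1+1:ℤ) : ℤ)⟧)
    rw [show (-(-1+1:ℤ) : ℤ) = 0 by norm_num]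
    exact w.ge_iso ((shiftFunctorZero C ℤ).app M.obj).symm M.2.2

lemma mem_right (M : ObjectProperty.FullSubcategory w.heart) :
    w.ge M.obj ∧ w.WithoutWeights 1 1 M.obj := by
  refine ⟨M.2.2, M.obj, 0, 𝟙 M.obj, 0, 0, contractible_distinguished M.obj, ?_, ?_⟩
  · show w.le (M.obj⟦(-(1-1:ℤ) : ℤ)⟧)
    rw [show (-(1-1:ℤ) : ℤ) = 0 by norm_num]
    exact w.le_iso ((shiftFunctorZero C ℤ).app M.obj).symm M.2.1
  · exact w.ge_zero _ ((shiftFunctor C (-(1+1:ℤ))).map_isZero (isZero_zero C))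


noncomputable section

def inclM : ObjectProperty.FullSubcategory w.heart ⥤
    ObjectProperty.FullSubcategory (fun M : C => w.le M ∧ w.WithoutWeights (-1) (-1) M) :=
  ObjectProperty.lift _ (ObjectProperty.ι w.heart) (mem_left w)

def inclP : ObjectProperty.FullSubcategory w.heart ⥤
    ObjectProperty.FullSubcategory (fun M : C => w.ge M ∧ w.WithoutWeights 1 1 M) :=
  ObjectProperty.lift _ (ObjectProperty.ι w.heart) (mem_right w)

def grmObj (M : ObjectProperty.FullSubcategory (fun M : C => w.le M ∧ w.WithoutWeights (-1) (-1) M)) : C :=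
  (gr_left_data M.2).choose

def grmMap (M : ObjectProperty.FullSubcategory (fun M : C => w.le M ∧ w.WithoutWeights (-1) (-1) M)) :
    M.obj ⟶ grmObj w M :=
  (gr_left_data M.2).choose_spec.choose

lemma grm_heart (M : ObjectProperty.FullSubcategory (fun M : C => w.le M ∧ w.WithoutWeights (-1) (-1) M)) :
    w.heart (grmObj w M) :=
  (gr_left_data M.2).choose_spec.choose_spec.1

lemma grm_bij (M : ObjectProperty.FullSubcategory (fun M : C => w.le M ∧ w.WithoutWeights (-1) (-1) M))
    (N : C) (hN : w.ge N) :
    Function.Bijective (fun φ : grmObj w M ⟶ N => grmMap w M ≫ φ) :=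
  (gr_left_data M.2).choose_spec.choose_spec.2 N hN

def grmEquiv (X : ObjectProperty.FullSubcategory (fun M : C => w.le M ∧ w.WithoutWeights (-1) (-1) M))
    (Y : ObjectProperty.FullSubcategory w.heart) :
    (grmObj w X ⟶ Y.obj) ≃ (X.obj ⟶ Y.obj) :=
  Equiv.ofBijective (fun φ : grmObj w X ⟶ Y.obj => grmMap w X ≫ φ) (grm_bij w X Y.obj Y.2.2)

lemma grmEquiv_apply (X : ObjectProperty.FullSubcategory (fun M : C => w.le M ∧ w.WithoutWeights (-1) (-1) M))
    (Y : ObjectProperty.FullSubcategory w.heart) (φ : grmObj w X ⟶ Y.obj) :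
    grmEquiv w X Y φ = grmMap w X ≫ φ :=
  rfl

def fsHomEquiv {P : ObjectProperty C} {X Y : P.FullSubcategory} :
    (X ⟶ Y) ≃ (X.obj ⟶ Y.obj) where
  toFun f := f.hom
  invFun f := ObjectProperty.homMk f
  left_inv _ := rfl
  right_inv _ := rfl

def grmPack :
    Σ' (F : ObjectProperty.FullSubcategory (fun M : C => w.le M ∧ w.WithoutWeights (-1) (-1) M) ⥤
      ObjectProperty.FullSubcategory w.heart), F ⊣ inclM w :=
  ⟨Adjunction.leftAdjointOfEquiv (G := inclM w)
    (F_obj := fun M => ⟨grmObj w M, grm_heart w M⟩)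
    (fun X Y => fsHomEquiv.trans ((grmEquiv w X Y).trans (fsHomEquiv (X := X) (Y := (inclM w).obj Y)).symm))
    (by
      intro X Y Y' k φ
      ext1
      show grmMap w X ≫ (φ.hom ≫ k.hom) = (grmMap w X ≫ φ.hom) ≫ k.hom
      rw [Category.assoc]),
   Adjunction.adjunctionOfEquivLeft _ _⟩

def grmFunctor :
    ObjectProperty.FullSubcategory (fun M : C => w.le M ∧ w.WithoutWeights (-1) (-1) M) ⥤
      ObjectProperty.FullSubcategory w.heart :=
  (grmPack w).1

def grmAdj : grmFunctor w ⊣ inclM w :=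
  (grmPack w).2

def grpObj (M : ObjectProperty.FullSubcategory (fun M : C => w.ge M ∧ w.WithoutWeights 1 1 M)) : C :=
  (gr_right_data M.2).choose

def grpMap (M : ObjectProperty.FullSubcategory (fun M : C => w.ge M ∧ w.WithoutWeights 1 1 M)) :
    grpObj w M ⟶ M.obj :=
  (gr_right_data M.2).choose_spec.choose

lemma grp_heart (M : ObjectProperty.FullSubcategory (fun M : C => w.ge M ∧ w.WithoutWeights 1 1 M)) :
    w.heart (grpObj w M) :=
  (gr_right_data M.2).choose_spec.choose_spec.1

lemma grp_bij (M : ObjectProperty.FullSubcategory (fun M : C => w.ge M ∧ w.WithoutWeights 1 1 M))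
    (N : C) (hN : w.le N) :
    Function.Bijective (fun φ : N ⟶ grpObj w M => φ ≫ grpMap w M) :=
  (gr_right_data M.2).choose_spec.choose_spec.2 N hN

def grpEquiv (X : ObjectProperty.FullSubcategory w.heart)
    (Y : ObjectProperty.FullSubcategory (fun M : C => w.ge M ∧ w.WithoutWeights 1 1 M)) :
    (X.obj ⟶ Y.obj) ≃ (X.obj ⟶ grpObj w Y) :=
  (Equiv.ofBijective (fun φ : X.obj ⟶ grpObj w Y => φ ≫ grpMap w Y)
    (grp_bij w Y X.obj X.2.1)).symm

lemma grpEquiv_comp (X : ObjectProperty.FullSubcategory w.heart)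
    (Y : ObjectProperty.FullSubcategory (fun M : C => w.ge M ∧ w.WithoutWeights 1 1 M))
    (z : X.obj ⟶ Y.obj) :
    grpEquiv w X Y z ≫ grpMap w Y = z :=
  Equiv.ofBijective_apply_symm_apply _ (grp_bij w Y X.obj X.2.1) z

lemma grp_he : ∀ (X' X : ObjectProperty.FullSubcategory w.heart)
    (Y : ObjectProperty.FullSubcategory (fun M : C => w.ge M ∧ w.WithoutWeights 1 1 M))
    (u : X'.obj ⟶ X.obj) (ψ : X.obj ⟶ Y.obj),
    grpEquiv w X' Y (u ≫ ψ) = u ≫ grpEquiv w X Y ψ := by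
  intro X' X Y u ψ
  apply (grp_bij w Y X'.obj X'.2.1).1
  show grpEquiv w X' Y (u ≫ ψ) ≫ grpMap w Y = (u ≫ grpEquiv w X Y ψ) ≫ grpMap w Y
  rw [grpEquiv_comp, Category.assoc, grpEquiv_comp]

def grpPack :
    Σ' (F : ObjectProperty.FullSubcategory (fun M : C => w.ge M ∧ w.WithoutWeights 1 1 M) ⥤
      ObjectProperty.FullSubcategory w.heart), inclP w ⊣ F :=
  ⟨Adjunction.rightAdjointOfEquiv (F := inclP w)
    (G_obj := fun M => ⟨grpObj w M, grp_heart w M⟩)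
    (fun X Y => fsHomEquiv.trans ((grpEquiv w X Y).trans (fsHomEquiv (X := X)
      (Y := (⟨grpObj w Y, grp_heart w Y⟩ : ObjectProperty.FullSubcategory w.heart))).symm))
    (fun X' X Y u ψ => by ext1; exact grp_he w X' X Y u.hom ψ.hom),
   Adjunction.adjunctionOfEquivRight _ _⟩

def grpFunctor :
    ObjectProperty.FullSubcategory (fun M : C => w.ge M ∧ w.WithoutWeights 1 1 M) ⥤
      ObjectProperty.FullSubcategory w.heart :=
  (grpPack w).1

def grpAdj : inclP w ⊣ grpFunctor w :=
  (grpPack w).2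


instance : (inclM w).Full :=
  inferInstanceAs ((ObjectProperty.lift _ (ObjectProperty.ι w.heart) (mem_left w)).Full)
instance : (inclM w).Faithful :=
  inferInstanceAs
    ((ObjectProperty.lift _ (ObjectProperty.ι w.heart) (mem_left w)).Faithful)
instance : (inclP w).Full :=
  inferInstanceAs ((ObjectProperty.lift _ (ObjectProperty.ι w.heart) (mem_right w)).Full)
instance : (inclP w).Faithful :=
  inferInstanceAs
    ((ObjectProperty.lift _ (ObjectProperty.ι w.heart) (mem_right w)).Faithful)

end

end GrZeroAux

/-- **Proposition 2F.** The inclusion `ι₋ : C_{w=0} → C_{w≤0, ≠-1}` admits a left adjoint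
`Gr₀`, and the inclusion `ι₊ : C_{w=0} → C_{w≥0, ≠1}` admits a right adjoint `Gr₀`. For
`M ∈ C_{w≤0, ≠-1}` with weight filtration `M_{≤-2} → M → M₀ → M_{≤-2}[1]` avoiding weight
`-1`, one has `Gr₀ M ≅ M₀`; dually for `M ∈ C_{w≥0, ≠1}`. The compositions `Gr₀ ∘ ι₋`
and `Gr₀ ∘ ι₊` are isomorphic to the identity of `C_{w=0}`. -/
theorem gr_zero_adjoints (w : WeightStructure C) :
    ∃ (hm : ∀ M : ObjectProperty.FullSubcategory w.heart,
        w.le M.obj ∧ w.WithoutWeights (-1) (-1) M.obj)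
      (hp : ∀ M : ObjectProperty.FullSubcategory w.heart,
        w.ge M.obj ∧ w.WithoutWeights 1 1 M.obj)
      (Grm : ObjectProperty.FullSubcategory (fun M : C => w.le M ∧ w.WithoutWeights (-1) (-1) M) ⥤
        ObjectProperty.FullSubcategory w.heart)
      (Grp : ObjectProperty.FullSubcategory (fun M : C => w.ge M ∧ w.WithoutWeights 1 1 M) ⥤
        ObjectProperty.FullSubcategory w.heart)
      (_ : Grm ⊣ ObjectProperty.lift
        (fun M : C => w.le M ∧ w.WithoutWeights (-1) (-1) M)
        (ObjectProperty.ι w.heart) hm)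
      (_ : ObjectProperty.lift (fun M : C => w.ge M ∧ w.WithoutWeights 1 1 M)
        (ObjectProperty.ι w.heart) hp ⊣ Grp),
      (∀ (M : ObjectProperty.FullSubcategory (fun M : C => w.le M ∧ w.WithoutWeights (-1) (-1) M))
        (A M₀ : C) (f : A ⟶ M.obj) (g : M.obj ⟶ M₀) (h : M₀ ⟶ A⟦(1 : ℤ)⟧),
        (Triangle.mk f g h ∈ distTriang C) → w.leW (-2) A → w.ge M₀ →
        Nonempty ((Grm.obj M).obj ≅ M₀)) ∧
      (∀ (M : ObjectProperty.FullSubcategory (fun M : C => w.ge M ∧ w.WithoutWeights 1 1 M))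
        (M₀ B : C) (f : M₀ ⟶ M.obj) (g : M.obj ⟶ B) (h : B ⟶ M₀⟦(1 : ℤ)⟧),
        (Triangle.mk f g h ∈ distTriang C) → w.le M₀ → w.geW 2 B →
        Nonempty ((Grp.obj M).obj ≅ M₀)) ∧
      Nonempty (ObjectProperty.lift
        (fun M : C => w.le M ∧ w.WithoutWeights (-1) (-1) M)
        (ObjectProperty.ι w.heart) hm ⋙ Grm ≅ 𝟭 (ObjectProperty.FullSubcategory w.heart)) ∧
      Nonempty (ObjectProperty.lift
        (fun M : C => w.ge M ∧ w.WithoutWeights 1 1 M)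
        (ObjectProperty.ι w.heart) hp ⋙ Grp ≅ 𝟭 (ObjectProperty.FullSubcategory w.heart)) := by
  refine ⟨GrZeroAux.mem_left w, GrZeroAux.mem_right w, GrZeroAux.grmFunctor w,
    GrZeroAux.grpFunctor w, GrZeroAux.grmAdj w, GrZeroAux.grpAdj w, ?_, ?_, ?_, ?_⟩
  · intro M A M₀b fb gb hb hTb hAb hgeb
    have hA2 : w.le (A⟦(2:ℤ)⟧) := GrZeroAux.leW_shift w _ 2 (by norm_num) hAb
    have bijb := fun (N : C) (hN : w.ge N) => GrZeroAux.bij_left hTb hA2 N hN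
    obtain ⟨φ, hφ⟩ := (GrZeroAux.grm_bij w M M₀b hgeb).2 gb
    obtain ⟨ψ, hψ⟩ := (bijb _ (GrZeroAux.grm_heart w M).2).2 (GrZeroAux.grmMap w M)
    dsimp only at hφ hψ
    refine ⟨⟨φ, ψ, ?_, ?_⟩⟩
    · apply (GrZeroAux.grm_bij w M _ (GrZeroAux.grm_heart w M).2).1
      show GrZeroAux.grmMap w M ≫ (φ ≫ ψ) = GrZeroAux.grmMap w M ≫ 𝟙 _
      rw [Category.comp_id, ← Category.assoc, hφ, hψ]
    · apply (bijb M₀b hgeb).1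
      show gb ≫ (ψ ≫ φ) = gb ≫ 𝟙 _
      rw [Category.comp_id, ← Category.assoc, hψ, hφ]
  · intro M M₀b B fb gb hb hTb hleb hBb
    have hB2 : w.ge (B⟦(-2:ℤ)⟧) := GrZeroAux.geW_shift w _ (-2) (by norm_num) hBb
    have bijb := fun (N : C) (hN : w.le N) => GrZeroAux.bij_right hTb hB2 N hN
    obtain ⟨φ, hφ⟩ := (bijb _ (GrZeroAux.grp_heart w M).1).2 (GrZeroAux.grpMap w M)
    obtain ⟨ψ, hψ⟩ := (GrZeroAux.grp_bij w M M₀b hleb).2 fb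
    dsimp only at hφ hψ
    refine ⟨⟨φ, ψ, ?_, ?_⟩⟩
    · apply (GrZeroAux.grp_bij w M _ (GrZeroAux.grp_heart w M).1).1
      show (φ ≫ ψ) ≫ GrZeroAux.grpMap w M = (𝟙 _) ≫ GrZeroAux.grpMap w M
      rw [Category.id_comp, Category.assoc, hψ, hφ]
    · apply (bijb M₀b hleb).1
      show (ψ ≫ φ) ≫ fb = (𝟙 _) ≫ fb
      rw [Category.id_comp, Category.assoc, hφ, hψ]
  · exact ⟨@asIso _ _ _ _ (GrZeroAux.grmAdj w).counit
      (Adjunction.counit_isIso_of_R_fully_faithful (GrZeroAux.grmAdj w))⟩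
  · exact ⟨(asIso (GrZeroAux.grpAdj w).unit).symm⟩
end
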